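/- arXiv:1002.0792 — 4 statements merged into one kernel-verified Lean document; each statement's English description precedes it below -/
import Mathlib

section
/- Let n ≥ 1 and let {S_t}_{t>0} and {T_t}_{t>0} be two families of bounded linear operators on L²(ℝⁿ;ℂ), each satisfying L² off-diagonal (Gaffney) estimates, with constants (C₁, c₁) and (C₂, c₂) respectively. Then there exist constants C, c > 0, depending only on C₁, c₁, C₂, c₂, such that for all closed sets E, F ⊆ ℝⁿ, all s, t > 0, and every f ∈ L²(ℝⁿ;ℂ) vanishing a.e. outside E, one has ‖1_F · S_s(T_t f)‖_{L²} ≤ C exp(−dist(E,F)² / (c · max{s,t})) ‖f‖_{L²}. -/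
open MeasureTheory

noncomputable section

abbrev Euc (n : ℕ) := EuclideanSpace ℝ (Fin n)

abbrev L2 (n : ℕ) := MeasureTheory.Lp ℂ 2 (volume : Measure (Euc n))

/-- Distance between two sets: `inf {dist x y : x ∈ E, y ∈ F}` (junk value `0` if empty). -/
noncomputable def setDist {X : Type*} [PseudoMetricSpace X] (E F : Set X) : ℝ :=
  sInf (Set.image2 dist E F)

/-- The family `S : ℝ → L²(ℝⁿ;ℂ) →L L²(ℝⁿ;ℂ)` satisfies L² off-diagonal (Gaffney)
estimates with constants `C, c > 0`. -/
def Gaffney (n : ℕ) (S : ℝ → L2 n →L[ℂ] L2 n) (C c : ℝ) : Prop :=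
  ∀ E F : Set (Euc n), IsClosed E → IsClosed F → ∀ t : ℝ, 0 < t →
    ∀ f : L2 n, (∀ᵐ x ∂(volume : Measure (Euc n)), x ∉ E → f x = 0) →
      eLpNorm (F.indicator (⇑(S t f))) 2 volume ≤
        ENNReal.ofReal (C * Real.exp (-(setDist E F) ^ 2 / (c * t))) *
          eLpNorm (⇑f) 2 volume

lemma setDist_nonneg' {X : Type*} [PseudoMetricSpace X] (E F : Set X) : 0 ≤ setDist E F := by
  apply Real.sInf_nonneg
  rintro y ⟨x, hx, z, hz, rfl⟩
  exact dist_nonneg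

lemma setDist_le_dist' {X : Type*} [PseudoMetricSpace X] {E F : Set X} {x y : X}
    (hx : x ∈ E) (hy : y ∈ F) : setDist E F ≤ dist x y :=
  csInf_le ⟨0, by rintro r ⟨a, _, b, _, rfl⟩; exact dist_nonneg⟩ (Set.mem_image2_of_mem hx hy)

lemma le_setDist' {X : Type*} [PseudoMetricSpace X] {E F : Set X} {r : ℝ}
    (hE : E.Nonempty) (hF : F.Nonempty) (h : ∀ x ∈ E, ∀ y ∈ F, r ≤ dist x y) :
    r ≤ setDist E F := by
  apply le_csInf (hE.image2 hF)
  rintro b ⟨a, ha, c, hc, rfl⟩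
  exact h a ha c hc

lemma exp_mono_aux {a b u v : ℝ} (ha : 0 ≤ a) (hab : a ≤ b) (hu : 0 < u) (huv : u ≤ v) :
    Real.exp (-b ^ 2 / u) ≤ Real.exp (-a ^ 2 / v) := by
  apply Real.exp_le_exp.mpr
  rw [neg_div, neg_div, neg_le_neg_iff]
  exact div_le_div₀ (by nlinarith) (by nlinarith) hu huv

set_option maxHeartbeats 1000000

/-- Composition of two Gaffney families again satisfies a Gaffney-type estimate, at the
scale `max s t`. -/
theorem statement0 (C₁ c₁ C₂ c₂ : ℝ) (hC₁ : 0 < C₁) (hc₁ : 0 < c₁)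
    (hC₂ : 0 < C₂) (hc₂ : 0 < c₂) :
    ∃ C > 0, ∃ c > 0, ∀ (n : ℕ), 1 ≤ n →
      ∀ (S T : ℝ → L2 n →L[ℂ] L2 n), Gaffney n S C₁ c₁ → Gaffney n T C₂ c₂ →
      ∀ E F : Set (Euc n), IsClosed E → IsClosed F →
      ∀ s t : ℝ, 0 < s → 0 < t →
      ∀ f : L2 n, (∀ᵐ x ∂(volume : Measure (Euc n)), x ∉ E → f x = 0) →
        eLpNorm (F.indicator (⇑(S s (T t f)))) 2 volume ≤
          ENNReal.ofReal (C * Real.exp (-(setDist E F) ^ 2 / (c * max s t))) *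
            eLpNorm (⇑f) 2 volume := by
  have hmaxc : 0 < max c₁ c₂ := lt_of_lt_of_le hc₁ (le_max_left _ _)
  refine ⟨2 * (C₁ * C₂), by positivity, 4 * max c₁ c₂, by positivity, ?_⟩
  intro n hn S T hS hT E F hE hF s t hs ht f hf
  -- trivial case: F empty
  rcases F.eq_empty_or_nonempty with rfl | hFne
  · refine le_trans (le_of_eq ?_) (zero_le)
    rw [Set.indicator_empty]
    exact eLpNorm_zero'
  -- trivial case: E empty
  rcases E.eq_empty_or_nonempty with rfl | hEne
  · have hf0 : f = 0 := by
      refine Lp.ext ?_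
      filter_upwards [hf, Lp.coeFn_zero ℂ 2 (volume : Measure (Euc n))] with x h1 h2
      rw [h2, Pi.zero_apply]
      exact h1 (Set.notMem_empty x)
    rw [hf0]
    calc eLpNorm (F.indicator ⇑(S s (T t (0 : L2 n)))) 2 volume
        ≤ eLpNorm (⇑(S s (T t (0 : L2 n)))) 2 volume := eLpNorm_indicator_le _
      _ = 0 := by
          rw [map_zero, map_zero, eLpNorm_congr_ae (Lp.coeFn_zero ℂ 2 _), eLpNorm_zero]
      _ ≤ _ := zero_le
  -- main case
  set d := setDist E F with hd
  have hd0 : 0 ≤ d := setDist_nonneg' E F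
  set m := max s t with hm
  have hsm : s ≤ m := le_max_left s t
  have htm : t ≤ m := le_max_right s t
  have hm0 : 0 < m := lt_of_lt_of_le hs hsm
  set X := Real.exp (-d ^ 2 / (4 * max c₁ c₂ * m)) with hX
  have hX0 : 0 < X := Real.exp_pos _
  set N := eLpNorm (⇑f) 2 (volume : Measure (Euc n)) with hN
  -- the intermediate set
  set G := {x : Euc n | Metric.infDist x E ≤ d / 2} with hG
  have hGclosed : IsClosed G := isClosed_le (Metric.continuous_infDist_pt E) continuous_const
  have hEG : E ⊆ G := by
    intro x hx
    simp only [hG, Set.mem_setOf_eq, Metric.infDist_zero_of_mem hx]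
    linarith
  have hmem : MemLp (⇑(T t f)) 2 (volume : Measure (Euc n)) := Lp.memLp _
  set g₁ : L2 n := (hmem.indicator hGclosed.measurableSet).toLp (G.indicator ⇑(T t f)) with hg₁
  set g₂ : L2 n :=
    (hmem.indicator hGclosed.measurableSet.compl).toLp (Gᶜ.indicator ⇑(T t f)) with hg₂
  have hg₁c : ⇑g₁ =ᵐ[volume] G.indicator ⇑(T t f) := MemLp.coeFn_toLp _
  have hg₂c : ⇑g₂ =ᵐ[volume] Gᶜ.indicator ⇑(T t f) := MemLp.coeFn_toLp _
  have hsplit : T t f = g₁ + g₂ := by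
    refine Lp.ext ?_
    filter_upwards [Lp.coeFn_add g₁ g₂, hg₁c, hg₂c] with x h1 h2 h3
    rw [h1, Pi.add_apply, h2, h3]
    by_cases hx : x ∈ G
    · rw [Set.indicator_of_mem hx, Set.indicator_of_notMem (by simpa using hx), add_zero]
    · rw [Set.indicator_of_notMem hx, Set.indicator_of_mem (by simpa using hx), zero_add]
  -- triangle inequality
  have hadd : eLpNorm (F.indicator ⇑(S s (T t f))) 2 volume ≤
      eLpNorm (F.indicator ⇑(S s g₁)) 2 volume + eLpNorm (F.indicator ⇑(S s g₂)) 2 volume := by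
    have h1 : F.indicator ⇑(S s (T t f)) =ᵐ[volume]
        F.indicator ⇑(S s g₁) + F.indicator ⇑(S s g₂) := by
      rw [hsplit, map_add]
      filter_upwards [Lp.coeFn_add (S s g₁) (S s g₂)] with x hx
      by_cases hxF : x ∈ F
      · rw [Pi.add_apply, Set.indicator_of_mem hxF, Set.indicator_of_mem hxF,
          Set.indicator_of_mem hxF]
        exact hx
      · simp [Set.indicator_of_notMem hxF]
    rw [eLpNorm_congr_ae h1]
    exact eLpNorm_add_le
      ((Lp.aestronglyMeasurable _).indicator hF.measurableSet)
      ((Lp.aestronglyMeasurable _).indicator hF.measurableSet) one_le_two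
  -- crude bound for T t f
  have hTf : eLpNorm (⇑(T t f)) 2 volume ≤ ENNReal.ofReal C₂ * N := by
    have h := hT E Set.univ hE isClosed_univ t ht f hf
    rw [Set.indicator_univ] at h
    refine h.trans ?_
    refine mul_le_mul' (ENNReal.ofReal_le_ofReal ?_) le_rfl
    have h1 : (0:ℝ) ≤ (setDist E (Set.univ : Set (Euc n))) ^ 2 / (c₂ * t) :=
      div_nonneg (sq_nonneg _) (by positivity)
    have h2 : Real.exp (-(setDist E (Set.univ : Set (Euc n))) ^ 2 / (c₂ * t)) ≤ 1 := by
      apply Real.exp_le_one_iff.mpr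
      rw [neg_div]
      linarith
    nlinarith
  -- the distance from G to F
  have hGF : d / 2 ≤ setDist G F := by
    apply le_setDist' (hEne.mono hEG) hFne
    intro x hx y hy
    have h1 : Metric.infDist x E ≤ d / 2 := hx
    have h2 : d - dist x y ≤ Metric.infDist x E := by
      by_contra hcon
      obtain ⟨e, he, hlt⟩ := (Metric.infDist_lt_iff hEne).mp (not_le.mp hcon)
      have h3 : d ≤ dist e y := setDist_le_dist' he hy
      have h4 : dist e y ≤ dist e x + dist x y := dist_triangle e x y
      have h5 : dist e x = dist x e := dist_comm _ _
      linarith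
    linarith
  have hexp1 : Real.exp (-(setDist G F) ^ 2 / (c₁ * s)) ≤ X := by
    have huv : c₁ * s ≤ max c₁ c₂ * m :=
      mul_le_mul (le_max_left _ _) hsm hs.le hmaxc.le
    have h := exp_mono_aux (by linarith : (0:ℝ) ≤ d / 2) hGF (by positivity) huv
    have heq : -(d / 2) ^ 2 / (max c₁ c₂ * m) = -d ^ 2 / (4 * max c₁ c₂ * m) := by ring
    rw [heq] at h
    rw [hX]
    exact h
  -- support condition for g₁
  have hg₁supp : ∀ᵐ x ∂(volume : Measure (Euc n)), x ∉ G → g₁ x = 0 := by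
    filter_upwards [hg₁c] with x hx hxG
    rw [hx, Set.indicator_of_notMem hxG]
  -- term 1
  have hterm1 : eLpNorm (F.indicator ⇑(S s g₁)) 2 volume ≤ ENNReal.ofReal (C₁ * C₂ * X) * N := by
    refine (hS G F hGclosed hF s hs g₁ hg₁supp).trans ?_
    have h1 : eLpNorm (⇑g₁) 2 volume ≤ eLpNorm (⇑(T t f)) 2 volume := by
      rw [eLpNorm_congr_ae hg₁c]
      exact eLpNorm_indicator_le _
    calc ENNReal.ofReal (C₁ * Real.exp (-(setDist G F) ^ 2 / (c₁ * s))) *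
          eLpNorm (⇑g₁) 2 volume
        ≤ ENNReal.ofReal (C₁ * X) * (ENNReal.ofReal C₂ * N) :=
          mul_le_mul' (ENNReal.ofReal_le_ofReal
            (mul_le_mul_of_nonneg_left hexp1 hC₁.le)) (h1.trans hTf)
      _ = ENNReal.ofReal (C₁ * C₂ * X) * N := by
          rw [← mul_assoc, ← ENNReal.ofReal_mul (by positivity)]
          have : C₁ * X * C₂ = C₁ * C₂ * X := by ring
          rw [this]
  -- term 2
  have hterm2 : eLpNorm (F.indicator ⇑(S s g₂)) 2 volume ≤ ENNReal.ofReal (C₁ * C₂ * X) * N := by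
    have hS2 := hS Set.univ F isClosed_univ hF s hs g₂ (by
      filter_upwards with x hx
      exact absurd (Set.mem_univ x) hx)
    refine hS2.trans ?_
    have hexpu : C₁ * Real.exp (-(setDist (Set.univ : Set (Euc n)) F) ^ 2 / (c₁ * s)) ≤ C₁ := by
      have h1 : (0:ℝ) ≤ (setDist (Set.univ : Set (Euc n)) F) ^ 2 / (c₁ * s) :=
        div_nonneg (sq_nonneg _) (by positivity)
      have h2 : Real.exp (-(setDist (Set.univ : Set (Euc n)) F) ^ 2 / (c₁ * s)) ≤ 1 := by
        apply Real.exp_le_one_iff.mpr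
        rw [neg_div]
        linarith
      nlinarith
    have h2 : eLpNorm (⇑g₂) 2 volume ≤ ENNReal.ofReal (C₂ * X) * N := by
      rcases Set.eq_empty_or_nonempty Gᶜ with hGc | hGc
      · have hz : eLpNorm (⇑g₂) 2 volume = 0 := by
          rw [eLpNorm_congr_ae hg₂c, hGc]
          simp
        rw [hz]
        exact zero_le
      · have hm1 : eLpNorm (⇑g₂) 2 volume ≤
            eLpNorm ((closure Gᶜ).indicator ⇑(T t f)) 2 volume := by
          rw [eLpNorm_congr_ae hg₂c]
          apply eLpNorm_mono
          intro x
          by_cases hx : x ∈ Gᶜ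
          · rw [Set.indicator_of_mem hx, Set.indicator_of_mem (subset_closure hx)]
          · rw [Set.indicator_of_notMem hx]
            simp only [norm_zero]
            exact norm_nonneg _
        have hdist2 : d / 2 ≤ setDist E (closure Gᶜ) := by
          apply le_setDist' hEne hGc.closure
          intro x hx y hy
          have hsub : closure Gᶜ ⊆ {z : Euc n | d / 2 ≤ dist x z} := by
            apply closure_minimal
            · intro z hz
              have h1 : ¬ Metric.infDist z E ≤ d / 2 := hz
              have h3 : d / 2 < Metric.infDist z E := not_le.mp h1
              have h4 : Metric.infDist z E ≤ dist z x := Metric.infDist_le_dist_of_mem hx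
              have h5 : dist z x = dist x z := dist_comm _ _
              simp only [Set.mem_setOf_eq]
              linarith
            · exact isClosed_le continuous_const (continuous_const.dist continuous_id)
          exact hsub hy
        have hexp2 : Real.exp (-(setDist E (closure Gᶜ)) ^ 2 / (c₂ * t)) ≤ X := by
          have huv : c₂ * t ≤ max c₁ c₂ * m :=
            mul_le_mul (le_max_right _ _) htm ht.le hmaxc.le
          have h := exp_mono_aux (by linarith : (0:ℝ) ≤ d / 2) hdist2 (by positivity) huv
          have heq : -(d / 2) ^ 2 / (max c₁ c₂ * m) = -d ^ 2 / (4 * max c₁ c₂ * m) := by ring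
          rw [heq] at h
          rw [hX]
          exact h
        calc eLpNorm (⇑g₂) 2 volume
            ≤ eLpNorm ((closure Gᶜ).indicator ⇑(T t f)) 2 volume := hm1
          _ ≤ ENNReal.ofReal (C₂ * Real.exp (-(setDist E (closure Gᶜ)) ^ 2 / (c₂ * t))) * N :=
              hT E (closure Gᶜ) hE isClosed_closure t ht f hf
          _ ≤ ENNReal.ofReal (C₂ * X) * N :=
              mul_le_mul' (ENNReal.ofReal_le_ofReal
                (mul_le_mul_of_nonneg_left hexp2 hC₂.le)) le_rfl
    calc ENNReal.ofReal
          (C₁ * Real.exp (-(setDist (Set.univ : Set (Euc n)) F) ^ 2 / (c₁ * s))) *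
          eLpNorm (⇑g₂) 2 volume
        ≤ ENNReal.ofReal C₁ * (ENNReal.ofReal (C₂ * X) * N) :=
          mul_le_mul' (ENNReal.ofReal_le_ofReal hexpu) h2
      _ = ENNReal.ofReal (C₁ * C₂ * X) * N := by
          rw [← mul_assoc, ← ENNReal.ofReal_mul hC₁.le]
          have : C₁ * (C₂ * X) = C₁ * C₂ * X := by ring
          rw [this]
  calc eLpNorm (F.indicator ⇑(S s (T t f))) 2 volume
      ≤ eLpNorm (F.indicator ⇑(S s g₁)) 2 volume +
        eLpNorm (F.indicator ⇑(S s g₂)) 2 volume := hadd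
    _ ≤ ENNReal.ofReal (C₁ * C₂ * X) * N + ENNReal.ofReal (C₁ * C₂ * X) * N :=
        add_le_add hterm1 hterm2
    _ = ENNReal.ofReal (2 * (C₁ * C₂) * X) * N := by
        rw [← add_mul, ← ENNReal.ofReal_add (by positivity) (by positivity)]
        have : C₁ * C₂ * X + C₁ * C₂ * X = 2 * (C₁ * C₂) * X := by ring
        rw [this]
end
end

section
/- Let 0 < θ < ν < π/2, σ > 0, τ > 1, C₀ > 0, and B > 0. Let ψ, f : ℂ → ℂ be functions such that for every s > 0 one has |ψ(s e^{iν})| ≤ C₀ s^σ/(1 + s^{σ+τ}) and |f(s e^{iν})| ≤ B. Then there exists a constant C > 0, depending only on σ, τ, θ, ν, C₀, such that for all t > 0 and all r > 0: ∫₀^∞ |exp(ρ e^{iν} · r e^{i(π/2−θ)})| · |ψ(t ρ e^{iν})| · |f(ρ e^{iν})| dρ ≤ (C B / t) · min{1, (t/r)^{σ+1}}. In particular, the contour-integral kernel η(z) = (1/(2πi)) ∫_{γ₊} e^{ξ z} ψ(tξ) f(ξ) dξ, taken over the ray γ₊ = {ρ e^{iν} : ρ > 0} and evaluated at z = r e^{i(π/2−θ)},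 satisfies |η(z)| ≤ (C B / t) min{1, (t/|z|)^{σ+1}}. -/
open MeasureTheory

noncomputable section


lemma aux_abs_exp (θ ν ρ r : ℝ) :
    ‖(Complex.exp (((ρ : ℂ) * Complex.exp ((ν : ℂ) * Complex.I)) *
        ((r : ℂ) * Complex.exp (((Real.pi / 2 - θ : ℝ) : ℂ) * Complex.I))))‖ =
      Real.exp (-(Real.sin (ν - θ) * r) * ρ) := by
  have h1 : ((ρ : ℂ) * Complex.exp ((ν : ℂ) * Complex.I)) *
      ((r : ℂ) * Complex.exp (((Real.pi / 2 - θ : ℝ) : ℂ) * Complex.I)) =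
      ((ρ * r : ℝ) : ℂ) * Complex.exp (((ν + (Real.pi / 2 - θ) : ℝ) : ℂ) * Complex.I) := by
    push_cast
    rw [add_mul, Complex.exp_add]
    ring
  rw [h1, Complex.norm_exp, Complex.re_ofReal_mul, Complex.exp_ofReal_mul_I_re]
  have h2 : Real.cos (ν + (Real.pi / 2 - θ)) = -Real.sin (ν - θ) := by
    rw [show ν + (Real.pi / 2 - θ) = Real.pi / 2 - (θ - ν) by ring, Real.cos_pi_div_two_sub,
      show θ - ν = -(ν - θ) by ring, Real.sin_neg]
  rw [h2]
  congr 1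
  ring

lemma aux_psi {σ τ : ℝ} (hσ : 0 < σ) (hτ : 1 < τ) {u : ℝ} (hu : 0 < u) :
    u ^ σ / (1 + u ^ (σ + τ)) ≤ min (u ^ σ) (u ^ (-τ)) := by
  have hst : (0:ℝ) < u ^ (σ + τ) := Real.rpow_pos_of_pos hu _
  have h1 : u ^ σ / (1 + u ^ (σ + τ)) ≤ u ^ σ := by
    apply div_le_self (Real.rpow_nonneg hu.le _)
    linarith
  have h2 : u ^ σ / (1 + u ^ (σ + τ)) ≤ u ^ (-τ) := by
    rw [div_le_iff₀ (by linarith), mul_add, mul_one, ← Real.rpow_add hu,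
      show -τ + (σ + τ) = σ by ring]
    have := Real.rpow_pos_of_pos hu (-τ)
    linarith
  exact le_min h1 h2

lemma aux_m {σ τ t : ℝ} (hσ : 0 < σ) (hτ : 1 < τ) (ht : 0 < t) :
    IntegrableOn (fun ρ : ℝ => min ((t*ρ) ^ σ) (((t*ρ) ^ τ)⁻¹)) (Set.Ioi 0) ∧
    ∫ ρ in Set.Ioi (0:ℝ), min ((t*ρ) ^ σ) (((t*ρ) ^ τ)⁻¹) ≤ (1/(σ+1) + 1/(τ-1)) / t := by
  have hti : (0:ℝ) < t⁻¹ := inv_pos.mpr ht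
  have hτ0 : (0:ℝ) ≤ τ := by linarith
  set m : ℝ → ℝ := fun ρ => min ((t*ρ) ^ σ) (((t*ρ) ^ τ)⁻¹) with hm
  have hmeas : Measurable m :=
    (((Real.continuous_rpow_const hσ.le).measurable).comp (measurable_id.const_mul t)).min
      ((((Real.continuous_rpow_const hτ0).measurable).comp (measurable_id.const_mul t)).inv)
  have hgσ : IntegrableOn (fun ρ : ℝ => t^σ * ρ^σ) (Set.Ioc 0 t⁻¹) :=
    ((intervalIntegral.intervalIntegrable_rpow' (by linarith)).1).const_mul _
  have hgτ : IntegrableOn (fun ρ : ℝ => t^(-τ) * ρ^(-τ)) (Set.Ioi t⁻¹) :=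
    (integrableOn_Ioi_rpow_of_lt (by linarith) hti).const_mul _
  have hbσ : ∀ ρ ∈ Set.Ioc (0:ℝ) t⁻¹, m ρ ≤ t^σ * ρ^σ := by
    intro ρ hρ
    have h0 : 0 < t * ρ := mul_pos ht hρ.1
    calc m ρ ≤ (t*ρ) ^ σ := min_le_left _ _
      _ = t^σ * ρ^σ := Real.mul_rpow ht.le hρ.1.le
  have hbτ : ∀ ρ ∈ Set.Ioi t⁻¹, m ρ ≤ t^(-τ) * ρ^(-τ) := by
    intro ρ hρ
    have hρ0 : (0:ℝ) < ρ := lt_trans hti hρ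
    calc m ρ ≤ ((t*ρ) ^ τ)⁻¹ := min_le_right _ _
      _ = (t*ρ) ^ (-τ) := (Real.rpow_neg (by positivity) τ).symm
      _ = t^(-τ) * ρ^(-τ) := Real.mul_rpow ht.le hρ0.le
  have hmnonneg : ∀ ρ : ℝ, 0 < ρ → 0 ≤ m ρ := by
    intro ρ hρ
    exact le_min (Real.rpow_nonneg (by positivity) _)
      (inv_nonneg.mpr (Real.rpow_nonneg (by positivity) _))
  have hmIoc : IntegrableOn m (Set.Ioc 0 t⁻¹) := by
    refine MeasureTheory.Integrable.mono hgσ hmeas.aestronglyMeasurable.restrict ?_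
    filter_upwards [ae_restrict_mem measurableSet_Ioc] with ρ hρ
    rw [Real.norm_eq_abs, abs_of_nonneg (hmnonneg ρ hρ.1)]
    exact (hbσ ρ hρ).trans (le_abs_self _)
  have hmIoi : IntegrableOn m (Set.Ioi t⁻¹) := by
    refine MeasureTheory.Integrable.mono hgτ hmeas.aestronglyMeasurable.restrict ?_
    filter_upwards [ae_restrict_mem measurableSet_Ioi] with ρ hρ
    rw [Real.norm_eq_abs, abs_of_nonneg (hmnonneg ρ (lt_trans hti hρ))]
    exact (hbτ ρ hρ).trans (le_abs_self _)
  have hsplit : Set.Ioc (0:ℝ) t⁻¹ ∪ Set.Ioi t⁻¹ = Set.Ioi 0 :=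
    Set.Ioc_union_Ioi_eq_Ioi hti.le
  have hint : IntegrableOn m (Set.Ioi 0) := by rw [← hsplit]; exact hmIoc.union hmIoi
  refine ⟨hint, ?_⟩
  have e1 : t^σ * ((t⁻¹)^(σ+1)) = t⁻¹ := by
    rw [Real.inv_rpow ht.le, ← Real.rpow_neg ht.le, ← Real.rpow_add ht,
      show σ + -(σ+1) = -1 by ring, Real.rpow_neg_one]
  have e2 : t^(-τ) * ((t⁻¹)^(-(τ-1))) = t⁻¹ := by
    rw [Real.inv_rpow ht.le, ← Real.rpow_neg ht.le, ← Real.rpow_add ht,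
      show -τ + -(-(τ-1)) = -1 by ring, Real.rpow_neg_one]
  have v1 : ∫ ρ in Set.Ioc (0:ℝ) t⁻¹, t^σ * ρ^σ = t^σ * ((t⁻¹)^(σ+1)/(σ+1)) := by
    rw [integral_const_mul, ← intervalIntegral.integral_of_le hti.le,
      integral_rpow (Or.inl (by linarith)), Real.zero_rpow (by linarith)]
    ring
  have v2 : ∫ ρ in Set.Ioi t⁻¹, t^(-τ) * ρ^(-τ) = t^(-τ) * (-(t⁻¹)^(-τ+1)/(-τ+1)) := by
    rw [integral_const_mul, integral_Ioi_rpow_of_lt (by linarith) hti]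
  have b1 : ∫ ρ in Set.Ioc (0:ℝ) t⁻¹, m ρ ≤ t⁻¹ / (σ+1) := by
    calc ∫ ρ in Set.Ioc (0:ℝ) t⁻¹, m ρ ≤ ∫ ρ in Set.Ioc (0:ℝ) t⁻¹, t^σ * ρ^σ :=
          setIntegral_mono_on hmIoc hgσ measurableSet_Ioc hbσ
      _ = t⁻¹ / (σ+1) := by rw [v1, ← mul_div_assoc, e1]
  have b2 : ∫ ρ in Set.Ioi t⁻¹, m ρ ≤ t⁻¹ / (τ-1) := by
    calc ∫ ρ in Set.Ioi t⁻¹, m ρ ≤ ∫ ρ in Set.Ioi t⁻¹, t^(-τ) * ρ^(-τ) :=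
          setIntegral_mono_on hmIoi hgτ measurableSet_Ioi hbτ
      _ = t⁻¹ / (τ-1) := by
          rw [v2, show (-τ+1 : ℝ) = -(τ-1) by ring, div_neg, neg_div, neg_neg,
            ← mul_div_assoc, e2]
  calc ∫ ρ in Set.Ioi (0:ℝ), m ρ
      = (∫ ρ in Set.Ioc (0:ℝ) t⁻¹, m ρ) + ∫ ρ in Set.Ioi t⁻¹, m ρ := by
        rw [← hsplit, setIntegral_union (Set.Ioc_disjoint_Ioi le_rfl) measurableSet_Ioi
          hmIoc hmIoi]
    _ ≤ t⁻¹/(σ+1) + t⁻¹/(τ-1) := add_le_add b1 b2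
    _ = (1/(σ+1) + 1/(τ-1)) / t := by
        have h1 : t ≠ 0 := ht.ne'
        have h2 : σ + 1 ≠ 0 := by linarith
        have h3 : τ - 1 ≠ 0 := by linarith
        field_simp

lemma aux_gamma {σ b : ℝ} (hσ : 0 < σ) (hb : 0 < b) :
    IntegrableOn (fun ρ : ℝ => ρ ^ σ * Real.exp (-b * ρ)) (Set.Ioi 0) ∧
    ∫ ρ in Set.Ioi (0:ℝ), ρ ^ σ * Real.exp (-b * ρ)
      = b ^ (-(σ+1)) * Real.Gamma (σ+1) := by
  have h1 := integrableOn_rpow_mul_exp_neg_mul_rpow (by linarith : (-1:ℝ) < σ) one_pos hb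
  have h2 := integral_rpow_mul_exp_neg_mul_rpow (p := 1) one_pos (by linarith : (-1:ℝ) < σ) hb
  simp only [Real.rpow_one] at h1 h2
  refine ⟨h1, ?_⟩
  rw [h2]
  norm_num

/-- Estimate on the contour-integral kernel `η` arising in the holomorphic functional
calculus: bound of the integrand along the ray `γ₊ = ℝ⁺ e^{iν}`, evaluated at
`z = r e^{i(π/2-θ)}`. -/
theorem statement1 (θ ν σ τ C₀ : ℝ) (hθ : 0 < θ) (hθν : θ < ν) (hν : ν < Real.pi / 2)
    (hσ : 0 < σ) (hτ : 1 < τ) (hC₀ : 0 < C₀) :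
    ∃ C > 0, ∀ B : ℝ, 0 < B → ∀ ψ f : ℂ → ℂ,
      (∀ s : ℝ, 0 < s →
        ‖(ψ ((s : ℂ) * Complex.exp ((ν : ℂ) * Complex.I)))‖ ≤
          C₀ * s ^ σ / (1 + s ^ (σ + τ))) →
      (∀ s : ℝ, 0 < s →
        ‖(f ((s : ℂ) * Complex.exp ((ν : ℂ) * Complex.I)))‖ ≤ B) →
      ∀ t : ℝ, 0 < t → ∀ r : ℝ, 0 < r →
        (∫ ρ in Set.Ioi (0 : ℝ),
            ‖(Complex.exp (((ρ : ℂ) * Complex.exp ((ν : ℂ) * Complex.I)) *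
                ((r : ℂ) * Complex.exp (((Real.pi / 2 - θ : ℝ) : ℂ) * Complex.I))))‖ *
              ‖(ψ ((t : ℂ) * (ρ : ℂ) * Complex.exp ((ν : ℂ) * Complex.I)))‖ *
              ‖(f ((ρ : ℂ) * Complex.exp ((ν : ℂ) * Complex.I)))‖) ≤
          C * B / t * min 1 ((t / r) ^ (σ + 1)) ∧
        ‖((1 / (2 * (Real.pi : ℂ) * Complex.I)) *
            ∫ ρ in Set.Ioi (0 : ℝ),
              Complex.exp (((ρ : ℂ) * Complex.exp ((ν : ℂ) * Complex.I)) *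
                  ((r : ℂ) * Complex.exp (((Real.pi / 2 - θ : ℝ) : ℂ) * Complex.I))) *
                ψ ((t : ℂ) * (ρ : ℂ) * Complex.exp ((ν : ℂ) * Complex.I)) *
                f ((ρ : ℂ) * Complex.exp ((ν : ℂ) * Complex.I)) *
                Complex.exp ((ν : ℂ) * Complex.I))‖ ≤
          C * B / t * min 1 ((t / r) ^ (σ + 1)) := by
  have hπ := Real.pi_pos
  have hc : 0 < Real.sin (ν - θ) :=
    Real.sin_pos_of_pos_of_lt_pi (by linarith) (by linarith)
  set c := Real.sin (ν - θ) with hcdef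
  have hΓ : 0 < Real.Gamma (σ + 1) := Real.Gamma_pos_of_pos (by linarith)
  have hCA0 : 0 < C₀ * (1/(σ+1) + 1/(τ-1)) := by
    have h1 : 0 < 1/(σ+1) := by positivity
    have h2 : 0 < 1/(τ-1) := by
      have : 0 < τ - 1 := by linarith
      positivity
    positivity
  have hCB0 : 0 < C₀ * Real.Gamma (σ+1) * c ^ (-(σ+1)) := by
    have := Real.rpow_pos_of_pos hc (-(σ+1))
    positivity
  set CA := C₀ * (1/(σ+1) + 1/(τ-1)) with hCA
  set CB := C₀ * Real.Gamma (σ+1) * c ^ (-(σ+1)) with hCB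
  refine ⟨max CA CB, lt_max_of_lt_left hCA0, ?_⟩
  intro B hB ψ f hψ hf t ht r hr
  have hcr : 0 < c * r := mul_pos hc hr
  obtain ⟨hm_int, hm_val⟩ := aux_m hσ hτ ht
  obtain ⟨hg_int, hg_val⟩ := aux_gamma hσ hcr
  -- pointwise bound on the integrand
  have hpt : ∀ ρ : ℝ, ρ ∈ Set.Ioi (0:ℝ) →
      ‖(Complex.exp (((ρ : ℂ) * Complex.exp ((ν : ℂ) * Complex.I)) *
          ((r : ℂ) * Complex.exp (((Real.pi / 2 - θ : ℝ) : ℂ) * Complex.I))))‖ *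
        ‖(ψ ((t : ℂ) * (ρ : ℂ) * Complex.exp ((ν : ℂ) * Complex.I)))‖ *
        ‖(f ((ρ : ℂ) * Complex.exp ((ν : ℂ) * Complex.I)))‖ ≤
      Real.exp (-(c*r)*ρ) * (C₀ * min ((t*ρ) ^ σ) (((t*ρ) ^ τ)⁻¹)) * B := by
    intro ρ hρ
    rw [Set.mem_Ioi] at hρ
    have hu : 0 < t * ρ := mul_pos ht hρ
    have hexp : ‖(Complex.exp (((ρ : ℂ) * Complex.exp ((ν : ℂ) * Complex.I)) *
        ((r : ℂ) * Complex.exp (((Real.pi / 2 - θ : ℝ) : ℂ) * Complex.I))))‖ =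
        Real.exp (-(c*r)*ρ) := by
      rw [aux_abs_exp θ ν ρ r]
    have hψ' := hψ (t*ρ) hu
    rw [Complex.ofReal_mul] at hψ'
    have hψ'' : ‖(ψ ((t : ℂ) * (ρ : ℂ) * Complex.exp ((ν : ℂ) * Complex.I)))‖ ≤
        C₀ * min ((t*ρ) ^ σ) (((t*ρ) ^ τ)⁻¹) := by
      refine hψ'.trans ?_
      rw [mul_div_assoc]
      refine mul_le_mul_of_nonneg_left ?_ hC₀.le
      have := aux_psi hσ hτ hu
      rwa [Real.rpow_neg hu.le] at this
    have hf' := hf ρ hρ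
    rw [hexp]
    have hmin0 : 0 ≤ C₀ * min ((t*ρ) ^ σ) (((t*ρ) ^ τ)⁻¹) := by
      have : (0:ℝ) ≤ min ((t*ρ) ^ σ) (((t*ρ) ^ τ)⁻¹) :=
        le_min (Real.rpow_nonneg hu.le _) (inv_nonneg.mpr (Real.rpow_nonneg hu.le _))
      positivity
    have hE : (0:ℝ) ≤ Real.exp (-(c*r)*ρ) := (Real.exp_pos _).le
    exact mul_le_mul (mul_le_mul_of_nonneg_left hψ'' hE) hf' (norm_nonneg _)
      (by positivity)
  have hnonneg : 0 ≤ᵐ[volume.restrict (Set.Ioi (0:ℝ))] fun ρ : ℝ =>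
      ‖(Complex.exp (((ρ : ℂ) * Complex.exp ((ν : ℂ) * Complex.I)) *
          ((r : ℂ) * Complex.exp (((Real.pi / 2 - θ : ℝ) : ℂ) * Complex.I))))‖ *
        ‖(ψ ((t : ℂ) * (ρ : ℂ) * Complex.exp ((ν : ℂ) * Complex.I)))‖ *
        ‖(f ((ρ : ℂ) * Complex.exp ((ν : ℂ) * Complex.I)))‖ :=
    Filter.Eventually.of_forall fun ρ => by positivity
  -- bound 1
  have bound1 : (∫ ρ in Set.Ioi (0 : ℝ),
      ‖(Complex.exp (((ρ : ℂ) * Complex.exp ((ν : ℂ) * Complex.I)) *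
          ((r : ℂ) * Complex.exp (((Real.pi / 2 - θ : ℝ) : ℂ) * Complex.I))))‖ *
        ‖(ψ ((t : ℂ) * (ρ : ℂ) * Complex.exp ((ν : ℂ) * Complex.I)))‖ *
        ‖(f ((ρ : ℂ) * Complex.exp ((ν : ℂ) * Complex.I)))‖) ≤ CA * B / t := by
    have hle : (∫ ρ in Set.Ioi (0 : ℝ),
        ‖(Complex.exp (((ρ : ℂ) * Complex.exp ((ν : ℂ) * Complex.I)) *
            ((r : ℂ) * Complex.exp (((Real.pi / 2 - θ : ℝ) : ℂ) * Complex.I))))‖ *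
          ‖(ψ ((t : ℂ) * (ρ : ℂ) * Complex.exp ((ν : ℂ) * Complex.I)))‖ *
          ‖(f ((ρ : ℂ) * Complex.exp ((ν : ℂ) * Complex.I)))‖) ≤
        ∫ ρ in Set.Ioi (0:ℝ), C₀ * B * min ((t*ρ) ^ σ) (((t*ρ) ^ τ)⁻¹) := by
      refine integral_mono_of_nonneg hnonneg (hm_int.const_mul _) ?_
      filter_upwards [ae_restrict_mem measurableSet_Ioi] with ρ hρ
      refine (hpt ρ hρ).trans ?_
      rw [Set.mem_Ioi] at hρ
      have hu : 0 < t * ρ := mul_pos ht hρ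
      have hE1 : Real.exp (-(c*r)*ρ) ≤ 1 := Real.exp_le_one_iff.mpr (by nlinarith)
      have hmin0 : (0:ℝ) ≤ min ((t*ρ) ^ σ) (((t*ρ) ^ τ)⁻¹) :=
        le_min (Real.rpow_nonneg hu.le _) (inv_nonneg.mpr (Real.rpow_nonneg hu.le _))
      calc Real.exp (-(c*r)*ρ) * (C₀ * min ((t*ρ) ^ σ) (((t*ρ) ^ τ)⁻¹)) * B
          ≤ 1 * (C₀ * min ((t*ρ) ^ σ) (((t*ρ) ^ τ)⁻¹)) * B :=
            mul_le_mul_of_nonneg_right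
              (mul_le_mul_of_nonneg_right hE1 (by positivity)) hB.le
        _ = C₀ * B * min ((t*ρ) ^ σ) (((t*ρ) ^ τ)⁻¹) := by ring
    refine hle.trans ?_
    rw [integral_const_mul]
    calc C₀ * B * ∫ ρ in Set.Ioi (0:ℝ), min ((t*ρ) ^ σ) (((t*ρ) ^ τ)⁻¹)
        ≤ C₀ * B * ((1/(σ+1) + 1/(τ-1)) / t) :=
          mul_le_mul_of_nonneg_left hm_val (by positivity)
      _ = CA * B / t := by rw [hCA]; ring
  -- bound 2
  have bound2 : (∫ ρ in Set.Ioi (0 : ℝ),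
      ‖(Complex.exp (((ρ : ℂ) * Complex.exp ((ν : ℂ) * Complex.I)) *
          ((r : ℂ) * Complex.exp (((Real.pi / 2 - θ : ℝ) : ℂ) * Complex.I))))‖ *
        ‖(ψ ((t : ℂ) * (ρ : ℂ) * Complex.exp ((ν : ℂ) * Complex.I)))‖ *
        ‖(f ((ρ : ℂ) * Complex.exp ((ν : ℂ) * Complex.I)))‖) ≤
      CB * B / t * (t/r) ^ (σ+1) := by
    have hle : (∫ ρ in Set.Ioi (0 : ℝ),
        ‖(Complex.exp (((ρ : ℂ) * Complex.exp ((ν : ℂ) * Complex.I)) *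
            ((r : ℂ) * Complex.exp (((Real.pi / 2 - θ : ℝ) : ℂ) * Complex.I))))‖ *
          ‖(ψ ((t : ℂ) * (ρ : ℂ) * Complex.exp ((ν : ℂ) * Complex.I)))‖ *
          ‖(f ((ρ : ℂ) * Complex.exp ((ν : ℂ) * Complex.I)))‖) ≤
        ∫ ρ in Set.Ioi (0:ℝ), C₀ * B * t ^ σ * (ρ ^ σ * Real.exp (-(c*r)*ρ)) := by
      refine integral_mono_of_nonneg hnonneg (hg_int.const_mul _) ?_
      filter_upwards [ae_restrict_mem measurableSet_Ioi] with ρ hρ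
      refine (hpt ρ hρ).trans ?_
      rw [Set.mem_Ioi] at hρ
      have hu : 0 < t * ρ := mul_pos ht hρ
      have hE : (0:ℝ) ≤ Real.exp (-(c*r)*ρ) := (Real.exp_pos _).le
      have hmin : min ((t*ρ) ^ σ) (((t*ρ) ^ τ)⁻¹) ≤ (t*ρ) ^ σ := min_le_left _ _
      calc Real.exp (-(c*r)*ρ) * (C₀ * min ((t*ρ) ^ σ) (((t*ρ) ^ τ)⁻¹)) * B
          ≤ Real.exp (-(c*r)*ρ) * (C₀ * (t*ρ) ^ σ) * B :=
            mul_le_mul_of_nonneg_right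
              (mul_le_mul_of_nonneg_left
                (mul_le_mul_of_nonneg_left hmin hC₀.le) hE) hB.le
        _ = C₀ * B * t ^ σ * (ρ ^ σ * Real.exp (-(c*r)*ρ)) := by
            rw [Real.mul_rpow ht.le hρ.le]; ring
    refine hle.trans ?_
    rw [integral_const_mul, hg_val]
    have e1 : (c*r) ^ (-(σ+1)) = c ^ (-(σ+1)) * r ^ (-(σ+1)) :=
      Real.mul_rpow hc.le hr.le
    have e2 : (t/r) ^ (σ+1) = t ^ (σ+1) / r ^ (σ+1) := Real.div_rpow ht.le hr.le (σ+1)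
    have e3 : t ^ (σ+1) = t ^ σ * t := by rw [Real.rpow_add ht, Real.rpow_one]
    have e4 : r ^ (-(σ+1)) = (r ^ (σ+1))⁻¹ := Real.rpow_neg hr.le _
    have hrp : r ^ (σ+1) ≠ 0 := (Real.rpow_pos_of_pos hr _).ne'
    rw [e1, e2, e3, e4, hCB]
    refine le_of_eq ?_
    field_simp
  -- combine
  have hfirst : (∫ ρ in Set.Ioi (0 : ℝ),
      ‖(Complex.exp (((ρ : ℂ) * Complex.exp ((ν : ℂ) * Complex.I)) *
          ((r : ℂ) * Complex.exp (((Real.pi / 2 - θ : ℝ) : ℂ) * Complex.I))))‖ *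
        ‖(ψ ((t : ℂ) * (ρ : ℂ) * Complex.exp ((ν : ℂ) * Complex.I)))‖ *
        ‖(f ((ρ : ℂ) * Complex.exp ((ν : ℂ) * Complex.I)))‖) ≤
      max CA CB * B / t * min 1 ((t / r) ^ (σ + 1)) := by
    rcases le_total ((t/r) ^ (σ+1)) 1 with h | h
    · rw [min_eq_right h]
      refine bound2.trans ?_
      have h1 : CB ≤ max CA CB := le_max_right _ _
      have h2 : (0:ℝ) ≤ (t/r) ^ (σ+1) := Real.rpow_nonneg (by positivity) _
      have h3 : (0:ℝ) ≤ B / t := by positivity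
      calc CB * B / t * (t/r) ^ (σ+1) = CB * (B / t * (t/r) ^ (σ+1)) := by ring
        _ ≤ max CA CB * (B / t * (t/r) ^ (σ+1)) :=
            mul_le_mul_of_nonneg_right h1 (by positivity)
        _ = max CA CB * B / t * (t/r) ^ (σ+1) := by ring
    · rw [min_eq_left h, mul_one]
      refine bound1.trans ?_
      have h1 : CA ≤ max CA CB := le_max_left _ _
      calc CA * B / t = CA * (B / t) := by ring
        _ ≤ max CA CB * (B / t) := mul_le_mul_of_nonneg_right h1 (by positivity)
        _ = max CA CB * B / t := by ring
  refine ⟨hfirst, ?_⟩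
  -- second part
  have habs : ‖(1 / (2 * (Real.pi : ℂ) * Complex.I))‖ = 1 / (2 * Real.pi) := by
    simp [abs_of_pos hπ]
  rw [norm_mul, habs]
  have h2 : ‖(∫ ρ in Set.Ioi (0 : ℝ),
      Complex.exp (((ρ : ℂ) * Complex.exp ((ν : ℂ) * Complex.I)) *
          ((r : ℂ) * Complex.exp (((Real.pi / 2 - θ : ℝ) : ℂ) * Complex.I))) *
        ψ ((t : ℂ) * (ρ : ℂ) * Complex.exp ((ν : ℂ) * Complex.I)) *
        f ((ρ : ℂ) * Complex.exp ((ν : ℂ) * Complex.I)) *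
        Complex.exp ((ν : ℂ) * Complex.I))‖ ≤
      ∫ ρ in Set.Ioi (0 : ℝ),
        ‖(Complex.exp (((ρ : ℂ) * Complex.exp ((ν : ℂ) * Complex.I)) *
            ((r : ℂ) * Complex.exp (((Real.pi / 2 - θ : ℝ) : ℂ) * Complex.I))))‖ *
          ‖(ψ ((t : ℂ) * (ρ : ℂ) * Complex.exp ((ν : ℂ) * Complex.I)))‖ *
          ‖(f ((ρ : ℂ) * Complex.exp ((ν : ℂ) * Complex.I)))‖ := by
    refine (norm_integral_le_integral_norm _).trans_eq ?_
    refine integral_congr_ae (Filter.Eventually.of_forall fun ρ => ?_)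
    simp [Complex.norm_exp_ofReal_mul_I]
  have h3 : 1 / (2 * Real.pi) ≤ 1 := by
    rw [div_le_one (by positivity)]
    nlinarith [Real.pi_gt_three]
  have h4 : (0:ℝ) ≤ ∫ ρ in Set.Ioi (0 : ℝ),
      ‖(Complex.exp (((ρ : ℂ) * Complex.exp ((ν : ℂ) * Complex.I)) *
          ((r : ℂ) * Complex.exp (((Real.pi / 2 - θ : ℝ) : ℂ) * Complex.I))))‖ *
        ‖(ψ ((t : ℂ) * (ρ : ℂ) * Complex.exp ((ν : ℂ) * Complex.I)))‖ *
        ‖(f ((ρ : ℂ) * Complex.exp ((ν : ℂ) * Complex.I)))‖ :=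
    integral_nonneg fun ρ => by positivity
  calc 1 / (2 * Real.pi) * ‖(∫ ρ in Set.Ioi (0 : ℝ),
        Complex.exp (((ρ : ℂ) * Complex.exp ((ν : ℂ) * Complex.I)) *
            ((r : ℂ) * Complex.exp (((Real.pi / 2 - θ : ℝ) : ℂ) * Complex.I))) *
          ψ ((t : ℂ) * (ρ : ℂ) * Complex.exp ((ν : ℂ) * Complex.I)) *
          f ((ρ : ℂ) * Complex.exp ((ν : ℂ) * Complex.I)) *
          Complex.exp ((ν : ℂ) * Complex.I))‖
      ≤ 1 * (∫ ρ in Set.Ioi (0 : ℝ),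
          ‖(Complex.exp (((ρ : ℂ) * Complex.exp ((ν : ℂ) * Complex.I)) *
              ((r : ℂ) * Complex.exp (((Real.pi / 2 - θ : ℝ) : ℂ) * Complex.I))))‖ *
            ‖(ψ ((t : ℂ) * (ρ : ℂ) * Complex.exp ((ν : ℂ) * Complex.I)))‖ *
            ‖(f ((ρ : ℂ) * Complex.exp ((ν : ℂ) * Complex.I)))‖) :=
        mul_le_mul h3 h2 (norm_nonneg _) one_pos.le
    _ ≤ max CA CB * B / t * min 1 ((t / r) ^ (σ + 1)) := by rw [one_mul]; exact hfirst
end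
end

section
/- For every σ > 0 and c > 0 there exists a constant C > 0, depending only on σ and c, such that for all t > 0 and all D > 0: (1/t) ∫₀^∞ exp(−D/(c r)) · min{1, (t/r)^{σ+1}} dr ≤ C · min{1, (t/D)^σ}. -/
open MeasureTheory

noncomputable section

open Real Set

set_option maxHeartbeats 1000000


lemma aux_exp_bound (α : ℝ) (hα : 0 < α) :
    ∃ K : ℝ, 1 ≤ K ∧ ∀ x : ℝ, 0 < x → Real.exp (-x) ≤ K * x ^ (-α) := by
  set n : ℕ := ⌈α⌉₊ with hn
  have hfac : (1 : ℝ) ≤ (Nat.factorial n : ℝ) := by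
    exact_mod_cast Nat.one_le_iff_ne_zero.mpr (Nat.factorial_ne_zero n)
  refine ⟨(Nat.factorial n : ℝ), hfac, ?_⟩
  intro x hx
  have hb : (0:ℝ) < x ^ α := Real.rpow_pos_of_pos hx α
  have hfp : (0:ℝ) < (Nat.factorial n : ℝ) := by positivity
  have key : x ^ α ≤ (Nat.factorial n : ℝ) * Real.exp x := by
    rcases le_or_gt 1 x with h1 | h1
    · have h2 : x ^ α ≤ x ^ (n : ℝ) := Real.rpow_le_rpow_of_exponent_le h1 (Nat.le_ceil α)
      have h3 : x ^ (n : ℝ) = x ^ n := Real.rpow_natCast x n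
      have h4 : x ^ n / (Nat.factorial n : ℝ) ≤ Real.exp x :=
        Real.pow_div_factorial_le_exp x hx.le n
      rw [div_le_iff₀ hfp] at h4
      calc x ^ α ≤ x ^ n := by rw [← h3]; exact h2
        _ ≤ (Nat.factorial n : ℝ) * Real.exp x := by nlinarith
    · have h2 : x ^ α ≤ 1 := Real.rpow_le_one hx.le h1.le hα.le
      have h3 : (1:ℝ) ≤ Real.exp x := by nlinarith [Real.add_one_le_exp x]
      nlinarith
  rw [Real.exp_neg, Real.rpow_neg hx.le]
  have h5 : x ^ α / (Nat.factorial n : ℝ) ≤ Real.exp x := by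
    rw [div_le_iff₀ hfp]; nlinarith [Real.exp_pos x]
  calc (Real.exp x)⁻¹ ≤ (x ^ α / (Nat.factorial n : ℝ))⁻¹ := inv_anti₀ (by positivity) h5
    _ = (Nat.factorial n : ℝ) * (x ^ α)⁻¹ := by rw [inv_div, div_eq_mul_inv]


/-- The scalar inequality at the analytic core of off-diagonal estimates of order `σ`:
`D` plays the role of `dist(E,F)²` and `t` the role of the scale parameter. -/
theorem statement2 (σ c : ℝ) (hσ : 0 < σ) (hc : 0 < c) :
    ∃ C > 0, ∀ t : ℝ, 0 < t → ∀ D : ℝ, 0 < D →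
      (1 / t) * ∫ r in Set.Ioi (0 : ℝ),
          Real.exp (-D / (c * r)) * min 1 ((t / r) ^ (σ + 1)) ≤
        C * min 1 ((t / D) ^ σ) := by
  obtain ⟨K, hK1, hK⟩ := aux_exp_bound (σ + 2⁻¹) (by linarith)
  have hKpos : (0:ℝ) < K := lt_of_lt_of_le one_pos hK1
  have hca : (0:ℝ) < c ^ (σ + 2⁻¹) := Real.rpow_pos_of_pos hc _
  refine ⟨1 + 1/σ + 3 * K * c ^ (σ + 2⁻¹), by positivity, ?_⟩
  intro t ht D hD
  set f : ℝ → ℝ := fun r => Real.exp (-D / (c * r)) * min 1 ((t / r) ^ (σ + 1)) with hfdef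
  -- continuity
  have hcont : ContinuousOn f (Ioi 0) := by
    apply ContinuousOn.mul
    · exact Real.continuous_exp.comp_continuousOn
        (continuousOn_const.div ((continuous_const.mul continuous_id).continuousOn)
          (fun r hr => mul_ne_zero hc.ne' (ne_of_gt hr)))
    · exact (continuous_const.min continuous_id).comp_continuousOn
        ((continuousOn_const.div continuousOn_id (fun r hr => ne_of_gt hr)).rpow_const
          (fun r hr => Or.inr (by linarith)))
  have hmeas' : ∀ s : Set ℝ, s ⊆ Ioi 0 → AEStronglyMeasurable f (volume.restrict s) :=
    fun s hs => (hcont.aestronglyMeasurable measurableSet_Ioi).mono_measure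
      (Measure.restrict_mono hs le_rfl)
  -- pointwise facts
  have hmin_nonneg : ∀ r ∈ Ioi (0:ℝ), (0:ℝ) ≤ min 1 ((t / r) ^ (σ + 1)) := by
    intro r hr
    have hr0 : (0:ℝ) < r := hr
    exact le_min zero_le_one (Real.rpow_nonneg (by positivity) _)
  have hf_nonneg : ∀ r ∈ Ioi (0:ℝ), 0 ≤ f r := fun r hr =>
    mul_nonneg (Real.exp_nonneg _) (hmin_nonneg r hr)
  have hexp_le_one : ∀ r ∈ Ioi (0:ℝ), Real.exp (-D / (c * r)) ≤ 1 := by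
    intro r hr
    have hr0 : (0:ℝ) < r := hr
    rw [Real.exp_le_one_iff]
    exact div_nonpos_of_nonpos_of_nonneg (by linarith) (by positivity)
  have hf_le_min : ∀ r ∈ Ioi (0:ℝ), f r ≤ min 1 ((t / r) ^ (σ + 1)) := fun r hr =>
    mul_le_of_le_one_left (hmin_nonneg r hr) (hexp_le_one r hr)
  have hf_le_one : ∀ r ∈ Ioi (0:ℝ), f r ≤ 1 := fun r hr =>
    (hf_le_min r hr).trans (min_le_left _ _)
  have hpow_eq : ∀ r ∈ Ioi (0:ℝ), (t / r) ^ (σ + 1) = t ^ (σ + 1) * r ^ (-(σ + 1)) := by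
    intro r hr
    have hr0 : (0:ℝ) < r := hr
    rw [Real.div_rpow ht.le hr0.le, Real.rpow_neg hr0.le, div_eq_mul_inv]
  have hf_le_pow : ∀ r ∈ Ioi (0:ℝ), f r ≤ t ^ (σ + 1) * r ^ (-(σ + 1)) := fun r hr =>
    le_of_le_of_eq ((hf_le_min r hr).trans (min_le_right _ _)) (hpow_eq r hr)
  -- exponential bound
  have hexp : ∀ r ∈ Ioi (0:ℝ),
      Real.exp (-D / (c * r)) ≤ K * (c / D) ^ (σ + 2⁻¹) * r ^ (σ + 2⁻¹) := by
    intro r hr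
    have hr0 : (0:ℝ) < r := hr
    have hcr : 0 < c * r := mul_pos hc hr0
    have h0 : 0 < D / (c * r) := div_pos hD hcr
    have h2 : -D / (c * r) = -(D / (c * r)) := neg_div _ _
    rw [h2]
    refine (hK _ h0).trans (le_of_eq ?_)
    rw [Real.rpow_neg h0.le, ← Real.inv_rpow h0.le, inv_div]
    have h3 : c * r / D = (c / D) * r := by ring
    rw [h3, Real.mul_rpow (by positivity) hr0.le, mul_assoc]
  have hf_le_g1 : ∀ r ∈ Ioi (0:ℝ), f r ≤ K * (c / D) ^ (σ + 2⁻¹) * r ^ (σ + 2⁻¹) := by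
    intro r hr
    calc f r ≤ Real.exp (-D / (c * r)) * 1 :=
          mul_le_mul_of_nonneg_left (min_le_left _ _) (Real.exp_nonneg _)
      _ = Real.exp (-D / (c * r)) := mul_one _
      _ ≤ _ := hexp r hr
  have hf_le_g2 : ∀ r ∈ Ioi (0:ℝ),
      f r ≤ K * (c / D) ^ (σ + 2⁻¹) * t ^ (σ + 1) * r ^ (-(2⁻¹:ℝ)) := by
    intro r hr
    have hr0 : (0:ℝ) < r := hr
    have hre : r ^ (σ + 2⁻¹) * r ^ (-(σ + 1)) = r ^ (-(2⁻¹:ℝ)) := by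
      rw [← Real.rpow_add hr0]; congr 1; ring
    have hB : (0:ℝ) ≤ K * (c / D) ^ (σ + 2⁻¹) * r ^ (σ + 2⁻¹) :=
      mul_nonneg (mul_nonneg hKpos.le (Real.rpow_nonneg (by positivity) _))
        (Real.rpow_nonneg hr0.le _)
    calc f r ≤ (K * (c / D) ^ (σ + 2⁻¹) * r ^ (σ + 2⁻¹)) * ((t / r) ^ (σ + 1)) :=
          mul_le_mul (hexp r hr) (min_le_right _ _) (hmin_nonneg r hr) hB
      _ = K * (c / D) ^ (σ + 2⁻¹) * t ^ (σ + 1) * (r ^ (σ + 2⁻¹) * r ^ (-(σ + 1))) := by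
          rw [hpow_eq r hr]; ring
      _ = _ := by rw [hre]
  -- integrability
  have hInt_Ioc : ∀ a : ℝ, 0 < a → IntegrableOn f (Ioc 0 a) := by
    intro a ha
    apply Integrable.mono' (integrableOn_const (C := (1:ℝ)) measure_Ioc_lt_top.ne)
      (hmeas' _ Ioc_subset_Ioi_self)
    filter_upwards [ae_restrict_mem measurableSet_Ioc] with r hr
    rw [Real.norm_eq_abs, abs_of_nonneg (hf_nonneg r hr.1)]
    exact hf_le_one r hr.1
  have hInt_pow_Ioi : ∀ a : ℝ, 0 < a →
      IntegrableOn (fun r : ℝ => t ^ (σ + 1) * r ^ (-(σ + 1))) (Ioi a) :=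
    fun a ha => (integrableOn_Ioi_rpow_of_lt (by linarith) ha).const_mul _
  have hInt_Ioi : ∀ a : ℝ, 0 < a → IntegrableOn f (Ioi a) := by
    intro a ha
    apply Integrable.mono' (hInt_pow_Ioi a ha) (hmeas' _ (Ioi_subset_Ioi ha.le))
    filter_upwards [ae_restrict_mem measurableSet_Ioi] with r hr
    have hr0 : (0:ℝ) < r := lt_trans ha hr
    rw [Real.norm_eq_abs, abs_of_nonneg (hf_nonneg r hr0)]
    exact hf_le_pow r hr0
  -- integral bounds
  have hIoi_pow_int : ∀ a : ℝ, 0 < a →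
      (∫ r in Ioi a, t ^ (σ + 1) * r ^ (-(σ + 1))) = t ^ (σ + 1) * (a ^ (-σ) / σ) := by
    intro a ha
    rw [integral_const_mul, integral_Ioi_rpow_of_lt (by linarith) ha]
    congr 1
    rw [show -(σ + 1) + 1 = -σ by ring]
    rw [div_eq_div_iff (by linarith) (by positivity)]
    ring
  have hIoi_le : ∀ a : ℝ, 0 < a → (∫ r in Ioi a, f r) ≤ t ^ (σ + 1) * (a ^ (-σ) / σ) := by
    intro a ha
    rw [← hIoi_pow_int a ha]
    exact setIntegral_mono_on (hInt_Ioi a ha) (hInt_pow_Ioi a ha) measurableSet_Ioi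
      (fun r hr => hf_le_pow r (lt_trans ha hr))
  have hIoc_le : ∀ a : ℝ, 0 < a → (∫ r in Ioc 0 a, f r) ≤ a := by
    intro a ha
    have h1 : (∫ r in Ioc 0 a, f r) ≤ ∫ _ in Ioc 0 a, (1:ℝ) :=
      setIntegral_mono_on (hInt_Ioc a ha) (integrableOn_const (C := (1:ℝ)) measure_Ioc_lt_top.ne)
        measurableSet_Ioc (fun r hr => hf_le_one r hr.1)
    simpa [Real.volume_Ioc, ha.le] using h1
  -- main split at t
  have hsplit : (∫ r in Ioi (0:ℝ), f r) = (∫ r in Ioc 0 t, f r) + ∫ r in Ioi t, f r := by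
    rw [← setIntegral_union (Ioc_disjoint_Ioi le_rfl) measurableSet_Ioi (hInt_Ioc t ht)
      (hInt_Ioi t ht), Ioc_union_Ioi_eq_Ioi ht.le]
  have hPpos : (0:ℝ) < (t / D) ^ σ := Real.rpow_pos_of_pos (div_pos ht hD) σ
  have httσ : t ^ (σ + 1) * t ^ (-σ) = t := by
    rw [← Real.rpow_add ht]; norm_num
  rcases le_or_gt D t with hDt | htD
  · -- case D ≤ t : min = 1
    have hmin1 : min 1 ((t / D) ^ σ) = 1 :=
      min_eq_left (Real.one_le_rpow ((one_le_div hD).mpr hDt) hσ.le)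
    rw [hmin1, mul_one]
    have h1 := hIoc_le t ht
    have h2 := hIoi_le t ht
    have h3 : t ^ (σ + 1) * (t ^ (-σ) / σ) = t / σ := by
      rw [mul_div_assoc', httσ]
    rw [h3] at h2
    rw [hsplit, one_div, inv_mul_le_iff₀ ht]
    have h4 : 0 ≤ t * (3 * K * c ^ (σ + 2⁻¹)) := by positivity
    have h5 : t * (1 + 1/σ + 3 * K * c ^ (σ + 2⁻¹))
        = t + t / σ + t * (3 * K * c ^ (σ + 2⁻¹)) := by ring
    linarith
  · -- case t < D
    have htD1 : t / D ≤ 1 := (div_le_one hD).mpr htD.le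
    have hmin2 : min 1 ((t / D) ^ σ) = (t / D) ^ σ :=
      min_eq_right (Real.rpow_le_one (by positivity) htD1 hσ.le)
    rw [hmin2]
    -- split Ioi t at D
    have hsplit2 : (∫ r in Ioi t, f r) = (∫ r in Ioc t D, f r) + ∫ r in Ioi D, f r := by
      rw [← setIntegral_union (Ioc_disjoint_Ioi le_rfl) measurableSet_Ioi
        ((hInt_Ioi t ht).mono_set Ioc_subset_Ioi_self) (hInt_Ioi D hD),
        Ioc_union_Ioi_eq_Ioi htD.le]
    -- bound piece 1 : Ioc 0 t with g1
    have hg1_int : IntegrableOn (fun r : ℝ => K * (c / D) ^ (σ + 2⁻¹) * r ^ (σ + 2⁻¹))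
        (Ioc 0 t) := ((intervalIntegral.intervalIntegrable_rpow' (by linarith)).1).const_mul _
    have hA : (∫ r in Ioc 0 t, f r) ≤
        K * (c / D) ^ (σ + 2⁻¹) * (t ^ (σ + 2⁻¹ + 1) / (σ + 2⁻¹ + 1)) := by
      have h2 : (∫ r in Ioc (0:ℝ) t, r ^ (σ + 2⁻¹)) = t ^ (σ + 2⁻¹ + 1) / (σ + 2⁻¹ + 1) := by
        rw [← intervalIntegral.integral_of_le ht.le,
          integral_rpow (Or.inl (by linarith : (-1:ℝ) < σ + 2⁻¹)),
          Real.zero_rpow (by positivity : (0:ℝ) < σ + 2⁻¹ + 1).ne', sub_zero]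
      have h1 : (∫ r in Ioc 0 t, f r) ≤
          ∫ r in Ioc 0 t, K * (c / D) ^ (σ + 2⁻¹) * r ^ (σ + 2⁻¹) :=
        setIntegral_mono_on (hInt_Ioc t ht) hg1_int measurableSet_Ioc
          (fun r hr => hf_le_g1 r hr.1)
      rw [integral_const_mul, h2] at h1
      exact h1
    -- bound piece 2 : Ioc t D with g2
    have hg2_int : IntegrableOn
        (fun r : ℝ => K * (c / D) ^ (σ + 2⁻¹) * t ^ (σ + 1) * r ^ (-(2⁻¹:ℝ)))
        (Ioc t D) := ((intervalIntegral.intervalIntegrable_rpow' (by norm_num)).1).const_mul _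
    have hB : (∫ r in Ioc t D, f r) ≤
        K * (c / D) ^ (σ + 2⁻¹) * t ^ (σ + 1) * (2 * D ^ (2⁻¹:ℝ)) := by
      have h1 : (∫ r in Ioc t D, f r) ≤
          ∫ r in Ioc t D, K * (c / D) ^ (σ + 2⁻¹) * t ^ (σ + 1) * r ^ (-(2⁻¹:ℝ)) :=
        setIntegral_mono_on ((hInt_Ioi t ht).mono_set Ioc_subset_Ioi_self) hg2_int
          measurableSet_Ioc (fun r hr => hf_le_g2 r (lt_trans ht hr.1))
      have h2 : (∫ r in Ioc t D, r ^ (-(2⁻¹:ℝ)))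
          = (D ^ (-(2⁻¹:ℝ) + 1) - t ^ (-(2⁻¹:ℝ) + 1)) / (-(2⁻¹:ℝ) + 1) := by
        rw [← intervalIntegral.integral_of_le htD.le,
          integral_rpow (Or.inl (by norm_num : (-1:ℝ) < -(2⁻¹:ℝ)))]
      rw [integral_const_mul, h2] at h1
      refine h1.trans (mul_le_mul_of_nonneg_left ?_ (by positivity))
      rw [show -(2⁻¹:ℝ) + 1 = 2⁻¹ by norm_num]
      have h2 : (0:ℝ) ≤ t ^ (2⁻¹:ℝ) := Real.rpow_nonneg ht.le _
      rw [div_le_iff₀ (by norm_num : (0:ℝ) < 2⁻¹)]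
      nlinarith [Real.rpow_nonneg hD.le (2⁻¹:ℝ)]
    -- bound piece 3 : Ioi D
    have hE : (∫ r in Ioi D, f r) ≤ t ^ (σ + 1) * (D ^ (-σ) / σ) := hIoi_le D hD
    -- assemble
    have e1 : (c / D) ^ (σ + 2⁻¹) = c ^ (σ + 2⁻¹) * (D ^ (σ + 2⁻¹))⁻¹ := by
      rw [Real.div_rpow hc.le hD.le, div_eq_mul_inv]
    have e4 : (D ^ (σ + 2⁻¹))⁻¹ * D ^ (2⁻¹:ℝ) = D ^ (-σ) := by
      rw [← Real.rpow_neg hD.le, ← Real.rpow_add hD]; norm_num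
    have e5 : t ^ σ * D ^ (-σ) = (t / D) ^ σ := by
      rw [Real.div_rpow ht.le hD.le, Real.rpow_neg hD.le, div_eq_mul_inv]
    have e3 : t ^ (σ + 1) = t ^ σ * t := by
      rw [Real.rpow_add ht, Real.rpow_one]
    have e2 : t ^ (σ + 2⁻¹ + 1) = t ^ (σ + 2⁻¹) * t := by
      rw [Real.rpow_add ht, Real.rpow_one]
    have e6 : t ^ (σ + 2⁻¹) * (D ^ (σ + 2⁻¹))⁻¹ = (t / D) ^ (σ + 2⁻¹) := by
      rw [Real.div_rpow ht.le hD.le, div_eq_mul_inv]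
    have e7 : (t / D) ^ (σ + 2⁻¹) ≤ (t / D) ^ σ :=
      Real.rpow_le_rpow_of_exponent_ge (div_pos ht hD) htD1 (by linarith)
    -- scaled bounds
    have hA' : (∫ r in Ioc 0 t, f r) ≤ K * c ^ (σ + 2⁻¹) * ((t / D) ^ σ) * t := by
      refine hA.trans ?_
      rw [e1, e2]
      have h8 : (0:ℝ) < D ^ (σ + 2⁻¹) := Real.rpow_pos_of_pos hD _
      have h9 : (0:ℝ) < t ^ (σ + 2⁻¹) := Real.rpow_pos_of_pos ht _
      have h10 : t ^ (σ + 2⁻¹) * (D ^ (σ + 2⁻¹))⁻¹ ≤ (t / D) ^ σ := e6 ▸ e7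
      have h11 : (1:ℝ) ≤ σ + 2⁻¹ + 1 := by linarith
      calc K * (c ^ (σ + 2⁻¹) * (D ^ (σ + 2⁻¹))⁻¹) * (t ^ (σ + 2⁻¹) * t / (σ + 2⁻¹ + 1))
          ≤ K * (c ^ (σ + 2⁻¹) * (D ^ (σ + 2⁻¹))⁻¹) * (t ^ (σ + 2⁻¹) * t) := by
            refine mul_le_mul_of_nonneg_left ?_ (by positivity)
            rw [div_le_iff₀ (by linarith : (0:ℝ) < σ + 2⁻¹ + 1)]
            nlinarith [mul_nonneg (mul_pos h9 ht).le (by linarith : (0:ℝ) ≤ σ + 2⁻¹)]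
        _ = K * c ^ (σ + 2⁻¹) * (t ^ (σ + 2⁻¹) * (D ^ (σ + 2⁻¹))⁻¹) * t := by ring
        _ ≤ K * c ^ (σ + 2⁻¹) * ((t / D) ^ σ) * t := by
            refine mul_le_mul_of_nonneg_right ?_ ht.le
            exact mul_le_mul_of_nonneg_left h10 (by positivity)
    have hB' : (∫ r in Ioc t D, f r) ≤ 2 * K * c ^ (σ + 2⁻¹) * ((t / D) ^ σ) * t := by
      refine hB.trans (le_of_eq ?_)
      rw [e1, e3]
      calc K * (c ^ (σ + 2⁻¹) * (D ^ (σ + 2⁻¹))⁻¹) * (t ^ σ * t) * (2 * D ^ (2⁻¹:ℝ))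
          = 2 * K * c ^ (σ + 2⁻¹) * (t ^ σ * ((D ^ (σ + 2⁻¹))⁻¹ * D ^ (2⁻¹:ℝ))) * t := by
            ring
        _ = 2 * K * c ^ (σ + 2⁻¹) * ((t / D) ^ σ) * t := by rw [e4, e5]
    have hE' : (∫ r in Ioi D, f r) ≤ (1/σ) * ((t / D) ^ σ) * t := by
      refine hE.trans (le_of_eq ?_)
      rw [e3]
      calc t ^ σ * t * (D ^ (-σ) / σ) = (1/σ) * (t ^ σ * D ^ (-σ)) * t := by ring
        _ = (1/σ) * ((t / D) ^ σ) * t := by rw [e5]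
    rw [hsplit, hsplit2, one_div, inv_mul_le_iff₀ ht]
    have hfin : K * c ^ (σ + 2⁻¹) * ((t / D) ^ σ) * t
        + 2 * K * c ^ (σ + 2⁻¹) * ((t / D) ^ σ) * t + (1/σ) * ((t / D) ^ σ) * t
        ≤ t * ((1 + 1/σ + 3 * K * c ^ (σ + 2⁻¹)) * (t / D) ^ σ) := by
      nlinarith [mul_pos hPpos ht]
    linarith
end
end

section
/- Let n ≥ 1 and let {P_t}_{t>0} be a family of bounded linear operators on L²(ℝⁿ;ℂ) satisfying L² off-diagonal (Gaffney) estimates with constants (C₁, c). Let M be a positive integer and N > 0. Then there exists a constant C > 0, depending only on n, M, N, C₁, c, such that for every cube Q ⊆ ℝⁿ, every f ∈ L²(ℝⁿ;ℂ) vanishing a.e. outside Q, and every integer j ≥ 1: ‖1_{S_j(Q)} · ((I − P_{ℓ(Q)²})^M f)‖_{L²} ≤ C · 2^{−jN} · ‖f‖_{L²}, where (I − P_{ℓ(Q)²})^M denotes the M-fold composition of I − P_{ℓ(Q)²}. -/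
open MeasureTheory ENNReal

set_option maxHeartbeats 1600000

noncomputable section

/-- The closed axis-parallel cube with center `z` and side length `ℓ`. -/
def cube {n : ℕ} (z : Euc n) (ℓ : ℝ) : Set (Euc n) :=
  {y | ∀ i, |y i - z i| ≤ ℓ / 2}

namespace Statement7Aux

variable {n : ℕ}

lemma setDist_nonneg (E F : Set (Euc n)) : 0 ≤ setDist E F := by
  apply Real.sInf_nonneg
  rintro x ⟨a, ha, b, hb, rfl⟩
  exact dist_nonneg

lemma le_setDist {E F : Set (Euc n)} {d : ℝ} (hE : E.Nonempty) (hF : F.Nonempty)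
    (h : ∀ x ∈ E, ∀ y ∈ F, d ≤ dist x y) : d ≤ setDist E F := by
  apply le_csInf (hE.image2 hF)
  rintro r ⟨a, ha, b, hb, rfl⟩
  exact h a ha b hb

lemma gaffney_step {P : ℝ → L2 n →L[ℂ] L2 n} {C₁ c : ℝ} (hP : Gaffney n P C₁ c)
    (hC₁ : 0 < C₁) (hc : 0 < c)
    {E F : Set (Euc n)} (hE : IsClosed E) (hF : IsClosed F) {d : ℝ} (hd : 0 ≤ d)
    (hdist : ∀ x ∈ E, ∀ y ∈ F, d ≤ dist x y) {t : ℝ} (ht : 0 < t)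
    (f : L2 n) (hf : ∀ᵐ x ∂(volume : Measure (Euc n)), x ∉ E → f x = 0) :
    eLpNorm (F.indicator (⇑(P t f))) 2 volume ≤
      ENNReal.ofReal (C₁ * Real.exp (-d ^ 2 / (c * t))) * eLpNorm (⇑f) 2 volume := by
  rcases F.eq_empty_or_nonempty with rfl | hFne
  · simp [Set.indicator_empty]
  rcases E.eq_empty_or_nonempty with rfl | hEne
  · have hf0 : (⇑f : Euc n → ℂ) =ᵐ[volume] 0 := by
      filter_upwards [hf] with x hx
      exact hx (by simp)
    have hfz : f = 0 := Lp.ext (hf0.trans (Lp.coeFn_zero ℂ 2 volume).symm)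
    rw [hfz, map_zero]
    have hz : F.indicator (⇑(0 : L2 n)) =ᵐ[volume] 0 := by
      filter_upwards [Lp.coeFn_zero ℂ 2 (volume : Measure (Euc n))] with x hx
      simp [Set.indicator_apply, hx]
    rw [eLpNorm_congr_ae hz]
    simp
  · have hdd : d ≤ setDist E F := le_setDist hEne hFne hdist
    refine (hP E F hE hF t ht f hf).trans ?_
    refine mul_le_mul_left (ENNReal.ofReal_le_ofReal ?_) _
    have h2 : d ^ 2 ≤ (setDist E F) ^ 2 := by nlinarith [setDist_nonneg E F]
    have hct : (0:ℝ) < c * t := mul_pos hc ht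
    have h3 : -(setDist E F) ^ 2 / (c * t) ≤ -d ^ 2 / (c * t) :=
      div_le_div_of_nonneg_right (by linarith) hct.le
    exact mul_le_mul_of_nonneg_left (Real.exp_le_exp.2 h3) hC₁.le

lemma gaffney_bound {P : ℝ → L2 n →L[ℂ] L2 n} {C₁ c : ℝ} (hP : Gaffney n P C₁ c)
    (hC₁ : 0 < C₁) (hc : 0 < c) {t : ℝ} (ht : 0 < t) (f : L2 n) :
    eLpNorm (⇑(P t f)) 2 volume ≤ ENNReal.ofReal C₁ * eLpNorm (⇑f) 2 volume := by
  have h := gaffney_step hP hC₁ hc isClosed_univ isClosed_univ (le_refl (0:ℝ))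
    (fun x _ y _ => dist_nonneg) ht f
    (by filter_upwards with x hx; exact absurd (Set.mem_univ x) hx)
  rw [Set.indicator_univ] at h
  simpa using h

lemma gaffney_pow_bound {P : ℝ → L2 n →L[ℂ] L2 n} {C₁ c : ℝ} (hP : Gaffney n P C₁ c)
    (hC₁ : 0 < C₁) (hc : 0 < c) {t : ℝ} (ht : 0 < t) (k : ℕ) (f : L2 n) :
    eLpNorm (⇑((P t ^ k) f)) 2 volume ≤ ENNReal.ofReal (C₁ ^ k) * eLpNorm (⇑f) 2 volume := by
  induction k with
  | zero => simp [ContinuousLinearMap.one_apply]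
  | succ k ih =>
    have h1 : (P t ^ (k + 1)) f = P t ((P t ^ k) f) := by
      rw [pow_succ', ContinuousLinearMap.mul_apply]
    rw [h1]
    calc eLpNorm (⇑(P t ((P t ^ k) f))) 2 volume
        ≤ ENNReal.ofReal C₁ * eLpNorm (⇑((P t ^ k) f)) 2 volume :=
          gaffney_bound hP hC₁ hc ht _
      _ ≤ ENNReal.ofReal C₁ * (ENNReal.ofReal (C₁ ^ k) * eLpNorm (⇑f) 2 volume) :=
          mul_le_mul_right ih _
      _ = ENNReal.ofReal (C₁ ^ (k + 1)) * eLpNorm (⇑f) 2 volume := by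
          rw [← mul_assoc, ← ENNReal.ofReal_mul hC₁.le, ← pow_succ']

lemma pair_dist_cthickening {E F : Set (Euc n)} {d : ℝ}
    (hdist : ∀ x ∈ E, ∀ y ∈ F, d ≤ dist x y) (hd : 0 ≤ d) :
    ∀ x ∈ Metric.cthickening (d / 2) E, ∀ y ∈ F, d / 2 ≤ dist x y := by
  intro x hx y hy
  have h1 : ENNReal.ofReal d ≤ EMetric.infEdist y E := by
    refine EMetric.le_infEdist.2 ?_
    intro e he
    rw [edist_dist]
    exact ENNReal.ofReal_le_ofReal (by rw [dist_comm]; exact hdist e he y hy)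
  have h2 : EMetric.infEdist x E ≤ ENNReal.ofReal (d / 2) := Metric.mem_cthickening_iff.1 hx
  have h3 : EMetric.infEdist y E ≤ EMetric.infEdist x E + edist y x :=
    EMetric.infEdist_le_infEdist_add_edist
  have h4 : ENNReal.ofReal d ≤ ENNReal.ofReal (d / 2) + edist x y := by
    rw [edist_comm x y]
    exact h1.trans (h3.trans (add_le_add_left h2 _))
  have h5 : ENNReal.ofReal (d / 2) ≤ edist x y := by
    rw [show ENNReal.ofReal d = ENNReal.ofReal (d / 2) + ENNReal.ofReal (d / 2) by
      rw [← ENNReal.ofReal_add (by positivity) (by positivity)]; ring_nf] at h4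
    exact (ENNReal.add_le_add_iff_left ENNReal.ofReal_ne_top).1 h4
  rw [edist_dist] at h5
  exact (ENNReal.ofReal_le_ofReal_iff dist_nonneg).1 h5

lemma pair_dist_closure_compl {E : Set (Euc n)} {d : ℝ} (hd : 0 ≤ d) :
    ∀ x ∈ E, ∀ y ∈ closure (Metric.cthickening (d / 2) E)ᶜ, d / 2 ≤ dist x y := by
  intro x hx y hy
  have hclosed : IsClosed {y : Euc n | ENNReal.ofReal (d / 2) ≤ EMetric.infEdist y E} :=
    isClosed_le continuous_const EMetric.continuous_infEdist
  have hsub : (Metric.cthickening (d / 2) E)ᶜ ⊆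
      {y : Euc n | ENNReal.ofReal (d / 2) ≤ EMetric.infEdist y E} := by
    intro y hy
    exact (not_le.1 fun h => hy (Metric.mem_cthickening_iff.2 h)).le
  have h1 := closure_minimal hsub hclosed hy
  have h2 : EMetric.infEdist y E ≤ edist y x := EMetric.infEdist_le_edist_of_mem hx
  have h3 : ENNReal.ofReal (d / 2) ≤ edist y x := le_trans h1 h2
  rw [edist_dist] at h3
  rw [dist_comm]
  exact (ENNReal.ofReal_le_ofReal_iff dist_nonneg).1 h3

lemma pair_dist_closure {X : Type*} [PseudoMetricSpace X] {A B : Set X} {d : ℝ}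
    (h : ∀ x ∈ A, ∀ y ∈ B, d ≤ dist x y) :
    ∀ x ∈ closure A, ∀ y ∈ closure B, d ≤ dist x y := by
  have h1 : ∀ x ∈ A, ∀ y ∈ closure B, d ≤ dist x y := by
    intro x hx
    have hcl : IsClosed {y : X | d ≤ dist x y} :=
      isClosed_le continuous_const (continuous_const.dist continuous_id)
    exact fun y hy => closure_minimal (fun y' hy' => h x hx y' hy') hcl hy
  intro x hx y hy
  have hcl : IsClosed {x : X | d ≤ dist x y} :=
    isClosed_le continuous_const (continuous_id.dist continuous_const)
  exact closure_minimal (fun x' hx' => h1 x' hx' y hy) hcl hx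

lemma gaffney_pow {P : ℝ → L2 n →L[ℂ] L2 n} {C₁ c : ℝ} (hP : Gaffney n P C₁ c)
    (hC₁ : 0 < C₁) (hc : 0 < c) :
    ∀ (k : ℕ) (E F : Set (Euc n)), IsClosed E → IsClosed F →
    ∀ d : ℝ, 0 ≤ d → (∀ x ∈ E, ∀ y ∈ F, d ≤ dist x y) →
    ∀ t : ℝ, 0 < t → ∀ f : L2 n, (∀ᵐ x ∂(volume : Measure (Euc n)), x ∉ E → f x = 0) →
    eLpNorm (F.indicator (⇑((P t ^ k) f))) 2 volume ≤
      ENNReal.ofReal ((2 * C₁ + 1) ^ k * Real.exp (-d ^ 2 / (4 ^ k * (c * t)))) *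
        eLpNorm (⇑f) 2 volume := by
  intro k
  induction k with
  | zero =>
    intro E F hE hF d hd hdist t ht f hf
    have e0 : (P t ^ 0) f = f := by rw [pow_zero, ContinuousLinearMap.one_apply]
    rw [e0]
    rcases hd.eq_or_lt with rfl | hd0
    · have hone : ENNReal.ofReal ((2 * C₁ + 1) ^ 0 *
          Real.exp (-(0:ℝ) ^ 2 / (4 ^ 0 * (c * t)))) = 1 := by
        norm_num
      rw [hone, one_mul]
      exact eLpNorm_indicator_le _
    · have hEF : F.indicator (⇑f) =ᵐ[volume] 0 := by
        filter_upwards [hf] with x hx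
        by_cases hxF : x ∈ F
        · rw [Set.indicator_of_mem hxF]
          apply hx
          intro hxE
          have := hdist x hxE x hxF
          simp at this
          linarith
        · simp [Set.indicator_of_notMem hxF]
      rw [eLpNorm_congr_ae hEF]
      simp
  | succ k ih =>
    intro E F hE hF d hd hdist t ht f hf
    have hδ : (0:ℝ) ≤ d / 2 := by positivity
    set G := Metric.cthickening (d / 2) E with hG
    have hGclosed : IsClosed G := Metric.isClosed_cthickening
    have hGm : MeasurableSet G := hGclosed.measurableSet
    set h : L2 n := (P t ^ k) f with hh
    have hmem := Lp.memLp h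
    set h₁ : L2 n := (hmem.indicator hGm).toLp _ with hh₁
    set h₂ : L2 n := (hmem.indicator hGm.compl).toLp _ with hh₂
    have e₁ : ⇑h₁ =ᵐ[volume] G.indicator (⇑h) := MemLp.coeFn_toLp _
    have e₂ : ⇑h₂ =ᵐ[volume] Gᶜ.indicator (⇑h) := MemLp.coeFn_toLp _
    have hsplit : h = h₁ + h₂ := by
      apply Lp.ext
      filter_upwards [Lp.coeFn_add h₁ h₂, e₁, e₂] with x hx h1x h2x
      rw [hx, Pi.add_apply, h1x, h2x]
      exact (congr_fun (Set.indicator_self_add_compl G (⇑h)) x).symm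
    have hsupp₁ : ∀ᵐ x ∂(volume : Measure (Euc n)), x ∉ G → h₁ x = 0 := by
      filter_upwards [e₁] with x hx hxG
      rw [hx, Set.indicator_of_notMem hxG]
    have hq : (P t ^ (k + 1)) f = P t h₁ + P t h₂ := by
      rw [pow_succ', ContinuousLinearMap.mul_apply, ← hh, hsplit, map_add]
    have hind : F.indicator (⇑((P t ^ (k + 1)) f)) =ᵐ[volume]
        F.indicator (⇑(P t h₁)) + F.indicator (⇑(P t h₂)) := by
      rw [hq]
      filter_upwards [Lp.coeFn_add (P t h₁) (P t h₂)] with x hx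
      rw [Pi.add_apply]
      by_cases hxF : x ∈ F
      · rw [Set.indicator_of_mem hxF, Set.indicator_of_mem hxF, Set.indicator_of_mem hxF,
          hx, Pi.add_apply]
      · rw [Set.indicator_of_notMem hxF, Set.indicator_of_notMem hxF,
          Set.indicator_of_notMem hxF, add_zero]
    have hmeas₁ : AEStronglyMeasurable (F.indicator (⇑(P t h₁))) volume :=
      (Lp.aestronglyMeasurable _).indicator hF.measurableSet
    have hmeas₂ : AEStronglyMeasurable (F.indicator (⇑(P t h₂))) volume :=
      (Lp.aestronglyMeasurable _).indicator hF.measurableSet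
    have hT1 : eLpNorm (F.indicator (⇑(P t h₁))) 2 volume ≤
        ENNReal.ofReal (C₁ * Real.exp (-(d / 2) ^ 2 / (c * t))) *
          (ENNReal.ofReal (C₁ ^ k) * eLpNorm (⇑f) 2 volume) := by
      have step := gaffney_step hP hC₁ hc hGclosed hF hδ
        (pair_dist_cthickening hdist hd) ht h₁ hsupp₁
      refine step.trans (mul_le_mul_right ?_ _)
      calc eLpNorm (⇑h₁) 2 volume = eLpNorm (G.indicator (⇑h)) 2 volume :=
            eLpNorm_congr_ae e₁
        _ ≤ eLpNorm (⇑h) 2 volume := eLpNorm_indicator_le _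
        _ ≤ ENNReal.ofReal (C₁ ^ k) * eLpNorm (⇑f) 2 volume := by
            rw [hh]; exact gaffney_pow_bound hP hC₁ hc ht k f
    have hT2 : eLpNorm (F.indicator (⇑(P t h₂))) 2 volume ≤
        ENNReal.ofReal C₁ *
          (ENNReal.ofReal ((2 * C₁ + 1) ^ k * Real.exp (-(d / 2) ^ 2 / (4 ^ k * (c * t)))) *
            eLpNorm (⇑f) 2 volume) := by
      refine (eLpNorm_indicator_le _).trans ?_
      refine (gaffney_bound hP hC₁ hc ht h₂).trans (mul_le_mul_right ?_ _)
      have e2' : eLpNorm (⇑h₂) 2 volume ≤ eLpNorm ((closure Gᶜ).indicator (⇑h)) 2 volume := by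
        rw [eLpNorm_congr_ae e₂]
        apply eLpNorm_mono
        intro x
        by_cases hx : x ∈ Gᶜ
        · rw [Set.indicator_of_mem hx, Set.indicator_of_mem (subset_closure hx)]
        · simp [Set.indicator_of_notMem hx]
      refine e2'.trans ?_
      rw [hh]
      exact ih E (closure Gᶜ) hE isClosed_closure (d / 2) hδ
        (pair_dist_closure_compl hd) t ht f hf
    have hreal : C₁ * Real.exp (-(d / 2) ^ 2 / (c * t)) * C₁ ^ k +
        C₁ * ((2 * C₁ + 1) ^ k * Real.exp (-(d / 2) ^ 2 / (4 ^ k * (c * t)))) ≤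
        (2 * C₁ + 1) ^ (k + 1) * Real.exp (-d ^ 2 / (4 ^ (k + 1) * (c * t))) := by
      have hct : (0:ℝ) < c * t := mul_pos hc ht
      have h4k : (0:ℝ) < 4 ^ k := by positivity
      have hexp_eq : -(d / 2) ^ 2 / (4 ^ k * (c * t)) = -d ^ 2 / (4 ^ (k + 1) * (c * t)) := by
        rw [pow_succ]
        ring
      have hexp_le : Real.exp (-(d / 2) ^ 2 / (c * t)) ≤
          Real.exp (-d ^ 2 / (4 ^ (k + 1) * (c * t))) := by
        apply Real.exp_le_exp.2
        have hA : -(d / 2) ^ 2 / (c * t) = -d ^ 2 / (4 * (c * t)) := by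
          ring
        rw [hA]
        have h44 : (4:ℝ) * (c * t) ≤ 4 ^ (k + 1) * (c * t) := by
          have h4 : (4:ℝ) ≤ 4 ^ (k + 1) := by
            calc (4:ℝ) = 4 ^ 1 := (pow_one 4).symm
              _ ≤ 4 ^ (k + 1) := pow_le_pow_right₀ (by norm_num) (by omega)
          exact mul_le_mul_of_nonneg_right h4 hct.le
        rw [neg_div, neg_div, neg_le_neg_iff]
        apply div_le_div_of_nonneg_left (by positivity) (by positivity) h44
      rw [hexp_eq]
      set Ex := Real.exp (-d ^ 2 / (4 ^ (k + 1) * (c * t))) with hEx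
      have hExpos : 0 < Ex := Real.exp_pos _
      have hpow : C₁ ^ k ≤ (2 * C₁ + 1) ^ k := pow_le_pow_left₀ hC₁.le (by linarith) k
      have hmul : Real.exp (-(d / 2) ^ 2 / (c * t)) * C₁ ^ k ≤ Ex * (2 * C₁ + 1) ^ k :=
        mul_le_mul hexp_le hpow (pow_nonneg hC₁.le k) hExpos.le
      have hmul2 := mul_le_mul_of_nonneg_left hmul hC₁.le
      have hpk : (0:ℝ) ≤ (2 * C₁ + 1) ^ k := by positivity
      nlinarith [pow_succ (2 * C₁ + 1) k, mul_nonneg hpk hExpos.le]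
    calc eLpNorm (F.indicator (⇑((P t ^ (k + 1)) f))) 2 volume
        = eLpNorm (F.indicator (⇑(P t h₁)) + F.indicator (⇑(P t h₂))) 2 volume :=
          eLpNorm_congr_ae hind
      _ ≤ eLpNorm (F.indicator (⇑(P t h₁))) 2 volume +
            eLpNorm (F.indicator (⇑(P t h₂))) 2 volume :=
          eLpNorm_add_le hmeas₁ hmeas₂ (by norm_num)
      _ ≤ ENNReal.ofReal (C₁ * Real.exp (-(d / 2) ^ 2 / (c * t))) *
            (ENNReal.ofReal (C₁ ^ k) * eLpNorm (⇑f) 2 volume) +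
          ENNReal.ofReal C₁ *
            (ENNReal.ofReal ((2 * C₁ + 1) ^ k *
                Real.exp (-(d / 2) ^ 2 / (4 ^ k * (c * t)))) *
              eLpNorm (⇑f) 2 volume) := add_le_add hT1 hT2
      _ = ENNReal.ofReal (C₁ * Real.exp (-(d / 2) ^ 2 / (c * t)) * C₁ ^ k +
            C₁ * ((2 * C₁ + 1) ^ k * Real.exp (-(d / 2) ^ 2 / (4 ^ k * (c * t))))) *
            eLpNorm (⇑f) 2 volume := by
          rw [← mul_assoc, ← mul_assoc, ← ENNReal.ofReal_mul (by positivity),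
            ← ENNReal.ofReal_mul hC₁.le, ← add_mul,
            ← ENNReal.ofReal_add (by positivity) (by positivity)]
      _ ≤ ENNReal.ofReal ((2 * C₁ + 1) ^ (k + 1) *
            Real.exp (-d ^ 2 / (4 ^ (k + 1) * (c * t)))) * eLpNorm (⇑f) 2 volume :=
          mul_le_mul_left (ENNReal.ofReal_le_ofReal hreal) _

lemma natCast_apply (c : ℕ) (f : L2 n) :
    ((c : L2 n →L[ℂ] L2 n)) f = (c : ℂ) • f := by
  induction c with
  | zero => simp
  | succ c ih =>
    have hc1 : ((c + 1 : ℕ) : L2 n →L[ℂ] L2 n) = (c : L2 n →L[ℂ] L2 n) + 1 := by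
      exact Nat.cast_succ c
    rw [hc1, ContinuousLinearMap.add_apply, ih, ContinuousLinearMap.one_apply,
      Nat.cast_succ, add_smul, one_smul]

lemma neg_pow_apply (p : L2 n →L[ℂ] L2 n) (m : ℕ) (f : L2 n) :
    ((-p) ^ m) f = ((-1 : ℂ) ^ m) • ((p ^ m) f) := by
  induction m with
  | zero => simp [ContinuousLinearMap.one_apply]
  | succ m ih =>
    have h1 : ((-p) ^ (m + 1)) f = (-p) (((-p) ^ m) f) := by
      rw [pow_succ', ContinuousLinearMap.mul_apply]
    have h2 : (p ^ (m + 1)) f = p ((p ^ m) f) := by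
      rw [pow_succ', ContinuousLinearMap.mul_apply]
    rw [h1, h2, ih, ContinuousLinearMap.map_smul, ContinuousLinearMap.neg_apply,
      show ((-1 : ℂ)) ^ (m + 1) = -((-1 : ℂ) ^ m) by ring, neg_smul, smul_neg]

lemma expand (p : L2 n →L[ℂ] L2 n) (M : ℕ) (f : L2 n) :
    (((1 : L2 n →L[ℂ] L2 n) - p) ^ M) f = ∑ m ∈ Finset.range (M + 1),
      ((-1 : ℂ) ^ m * (M.choose m : ℂ)) • ((p ^ m) f) := by
  have h1 : ((1 : L2 n →L[ℂ] L2 n) - p) ^ M = ((-p) + 1) ^ M := by rw [neg_add_eq_sub]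
  rw [h1, (Commute.one_right (-p)).add_pow, ContinuousLinearMap.sum_apply]
  refine Finset.sum_congr rfl fun m hm => ?_
  rw [one_pow, mul_one, ContinuousLinearMap.mul_apply, natCast_apply,
    ContinuousLinearMap.map_smul, neg_pow_apply, smul_smul, mul_comm]

lemma eLpNorm_indicator_sum_le {ι : Type*} (s : Finset ι) (A : Set (Euc n))
    (hA : MeasurableSet A) (g : ι → L2 n) :
    eLpNorm (A.indicator (⇑(∑ i ∈ s, g i))) 2 volume ≤
      ∑ i ∈ s, eLpNorm (A.indicator (⇑(g i))) 2 volume := by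
  classical
  induction s using Finset.cons_induction with
  | empty =>
    have hz : A.indicator (⇑(∑ i ∈ (∅ : Finset ι), g i)) =ᵐ[volume] 0 := by
      rw [Finset.sum_empty]
      filter_upwards [Lp.coeFn_zero ℂ 2 (volume : Measure (Euc n))] with x hx
      simp [Set.indicator_apply, hx]
    rw [eLpNorm_congr_ae hz]
    simp
  | cons a s ha ih =>
    rw [Finset.sum_cons, Finset.sum_cons]
    have hadd : A.indicator (⇑(g a + ∑ i ∈ s, g i)) =ᵐ[volume]
        A.indicator (⇑(g a)) + A.indicator (⇑(∑ i ∈ s, g i)) := by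
      filter_upwards [Lp.coeFn_add (g a) (∑ i ∈ s, g i)] with x hx
      rw [Pi.add_apply]
      by_cases hxA : x ∈ A
      · rw [Set.indicator_of_mem hxA, Set.indicator_of_mem hxA, Set.indicator_of_mem hxA,
          hx, Pi.add_apply]
      · rw [Set.indicator_of_notMem hxA, Set.indicator_of_notMem hxA,
          Set.indicator_of_notMem hxA, add_zero]
    rw [eLpNorm_congr_ae hadd]
    refine (eLpNorm_add_le ((Lp.aestronglyMeasurable _).indicator hA)
      ((Lp.aestronglyMeasurable _).indicator hA) (by norm_num)).trans ?_
    exact add_le_add le_rfl ih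

lemma abs_coord_le_dist (x y : Euc n) (i : Fin n) : |x i - y i| ≤ dist x y := by
  rw [EuclideanSpace.dist_eq, show |x i - y i| = Real.sqrt ((x i - y i) ^ 2) from
    (Real.sqrt_sq_eq_abs _).symm]
  apply Real.sqrt_le_sqrt
  have h := Finset.single_le_sum (f := fun i => dist (x i) (y i) ^ 2)
    (fun i _ => sq_nonneg _) (Finset.mem_univ i)
  simpa [Real.dist_eq, sq_abs] using h

lemma isClosed_cube (z : Euc n) (r : ℝ) : IsClosed (cube z r) := by
  have h : cube z r = ⋂ i, {y : Euc n | |y i - z i| ≤ r / 2} := by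
    ext y; simp [cube, Set.mem_iInter]
  rw [h]
  refine isClosed_iInter fun i => isClosed_le ?_ continuous_const
  exact (((EuclideanSpace.proj i : Euc n →L[ℝ] ℝ).continuous).sub continuous_const).abs

lemma cube_pair_dist {z : Euc n} {ℓ : ℝ} (hℓ : 0 < ℓ) (j : ℕ) :
    ∀ x ∈ cube z ℓ, ∀ y ∈ (cube z ((2:ℝ) ^ j * ℓ) \ cube z ((2:ℝ) ^ (j - 1) * ℓ)),
      ((2:ℝ) ^ (j - 1) - 1) * ℓ / 2 ≤ dist x y := by
  intro x hx y hy
  obtain ⟨-, hy2⟩ := hy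
  simp only [cube, Set.mem_setOf_eq] at hx hy2
  push_neg at hy2
  obtain ⟨i, hi⟩ := hy2
  have hxi := hx i
  have h1 : |y i - x i| ≤ dist x y := by
    rw [abs_sub_comm]; exact abs_coord_le_dist x y i
  have h2 : |y i - z i| - |x i - z i| ≤ |y i - x i| := by
    have h3 := abs_sub_abs_le_abs_sub (y i - z i) (x i - z i)
    have h4 : (y i - z i) - (x i - z i) = y i - x i := by ring
    rwa [h4] at h3
  linarith

lemma decay_bound {β Nr : ℝ} (hβ : 0 < β) (hN : 0 < Nr) :
    ∃ C2 > 0, ∀ j : ℕ, 1 ≤ j →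
      Real.exp (-((j : ℝ) - 1) ^ 2 * β) ≤ C2 * (2 : ℝ) ^ (-(j : ℝ) * Nr) := by
  set α := Nr * Real.log 2 with hα
  refine ⟨Real.exp (α + α ^ 2 / (4 * β)), Real.exp_pos _, ?_⟩
  intro j hj
  have h2 : (2 : ℝ) ^ (-(j : ℝ) * Nr) = Real.exp ((-(j : ℝ) * Nr) * Real.log 2) := by
    rw [Real.rpow_def_of_pos (by norm_num)]
    ring_nf
  rw [h2, ← Real.exp_add]
  apply Real.exp_le_exp.2
  have hK : α ^ 2 = 4 * β * (α ^ 2 / (4 * β)) := by field_simp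
  have hjα : -(↑j : ℝ) * Nr * Real.log 2 = -((↑j : ℝ) * α) := by rw [hα]; ring
  rw [hjα]
  nlinarith [sq_nonneg (2 * β * ((j : ℝ) - 1) - α), hK, hβ]

end Statement7Aux

open Statement7Aux in
/-- Rapid decay, on the dyadic annuli `S_j(Q) = 2^jQ ∖ 2^{j-1}Q`, of
`(I − P_{ℓ(Q)²})^M f` for `f` supported in the cube `Q`. -/
theorem statement7 (n : ℕ) (hn : 1 ≤ n) (M : ℕ) (hM : 1 ≤ M) (N C₁ c : ℝ)
    (hN : 0 < N) (hC₁ : 0 < C₁) (hc : 0 < c) :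
    ∃ C > 0, ∀ P : ℝ → L2 n →L[ℂ] L2 n, Gaffney n P C₁ c →
      ∀ (z : Euc n) (ℓ : ℝ), 0 < ℓ →
      ∀ f : L2 n, (∀ᵐ x ∂(volume : Measure (Euc n)), x ∉ cube z ℓ → f x = 0) →
      ∀ j : ℕ, 1 ≤ j →
        eLpNorm ((cube z ((2 : ℝ) ^ j * ℓ) \ cube z ((2 : ℝ) ^ (j - 1) * ℓ)).indicator
            (⇑((((1 : L2 n →L[ℂ] L2 n) - P (ℓ ^ 2)) ^ M) f))) 2 volume ≤
          ENNReal.ofReal (C * (2 : ℝ) ^ (-(j : ℝ) * N)) * eLpNorm (⇑f) 2 volume := by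
  have hβ : (0:ℝ) < 1 / (4 ^ (M + 1) * c) := by positivity
  obtain ⟨C₂, hC₂pos, hC₂⟩ := decay_bound (β := 1 / (4 ^ (M + 1) * c)) hβ hN
  refine ⟨((M : ℝ) + 1) * ((2 * C₁ + 1) ^ M * 2 ^ M) * C₂, by positivity, ?_⟩
  intro P hP z ℓ hℓ f hf j hj
  set p := P (ℓ ^ 2) with hp
  set Sj := cube z ((2 : ℝ) ^ j * ℓ) \ cube z ((2 : ℝ) ^ (j - 1) * ℓ) with hSj
  have hSm : MeasurableSet Sj :=
    ((isClosed_cube z _).measurableSet).diff ((isClosed_cube z _).measurableSet)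
  set E := closure (cube z ℓ) with hE
  set F := closure Sj with hF
  set d : ℝ := ((2:ℝ) ^ (j - 1) - 1) * ℓ / 2 with hd
  have h2j : (1:ℝ) ≤ (2:ℝ) ^ (j - 1) := one_le_pow₀ (by norm_num)
  have hd0 : 0 ≤ d := by
    rw [hd]
    have : (0:ℝ) ≤ (2:ℝ) ^ (j - 1) - 1 := by linarith
    positivity
  have hdist : ∀ x ∈ E, ∀ y ∈ F, d ≤ dist x y :=
    pair_dist_closure (cube_pair_dist hℓ j)
  have hfE : ∀ᵐ x ∂(volume : Measure (Euc n)), x ∉ E → f x = 0 := by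
    filter_upwards [hf] with x hx hxE
    exact hx fun h => hxE (subset_closure h)
  have ht : (0:ℝ) < ℓ ^ 2 := by positivity
  -- the expansion
  have hexp := expand p M f
  rw [hexp]
  -- bound each term
  have hterm : ∀ m ∈ Finset.range (M + 1),
      eLpNorm (Sj.indicator (⇑(((-1 : ℂ) ^ m * (M.choose m : ℂ)) • ((p ^ m) f)))) 2 volume ≤
        ENNReal.ofReal ((2 * C₁ + 1) ^ M * 2 ^ M * (C₂ * (2 : ℝ) ^ (-(j : ℝ) * N))) *
          eLpNorm (⇑f) 2 volume := by
    intro m hm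
    rw [Finset.mem_range] at hm
    set cm : ℂ := (-1 : ℂ) ^ m * (M.choose m : ℂ) with hcm
    have hsm : cm • ((p ^ m) f) = (p ^ m) (cm • f) := (map_smul _ _ _).symm
    rw [hsm]
    have hmono : eLpNorm (Sj.indicator (⇑((p ^ m) (cm • f)))) 2 volume ≤
        eLpNorm (F.indicator (⇑((p ^ m) (cm • f)))) 2 volume := by
      apply eLpNorm_mono
      intro x
      by_cases hx : x ∈ Sj
      · rw [Set.indicator_of_mem hx, Set.indicator_of_mem (subset_closure hx)]
      · simp [Set.indicator_of_notMem hx]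
    refine hmono.trans ?_
    have hsupp : ∀ᵐ x ∂(volume : Measure (Euc n)), x ∉ E → (cm • f) x = 0 := by
      filter_upwards [hfE, Lp.coeFn_smul cm f] with x h1 h2 hxE
      rw [h2, Pi.smul_apply, h1 hxE, smul_zero]
    have hgp := gaffney_pow hP hC₁ hc m E F isClosed_closure isClosed_closure d hd0
      hdist (ℓ ^ 2) ht (cm • f) hsupp
    refine hgp.trans ?_
    -- norm of cm • f
    have hnorm : eLpNorm (⇑(cm • f)) 2 volume = ENNReal.ofReal ‖cm‖ * eLpNorm (⇑f) 2 volume := by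
      rw [eLpNorm_congr_ae (Lp.coeFn_smul cm f), eLpNorm_const_smul]
      rw [← ofReal_norm]
    rw [hnorm, ← mul_assoc, ← ENNReal.ofReal_mul (by positivity)]
    refine mul_le_mul_left (ENNReal.ofReal_le_ofReal ?_) _
    have hcmnorm : ‖cm‖ ≤ (2:ℝ) ^ M := by
      rw [hcm, norm_mul, norm_pow, norm_neg, norm_one, one_pow, one_mul]
      have hch : (M.choose m : ℝ) ≤ ((2 ^ M : ℕ) : ℝ) := by
        have hle : M.choose m ≤ 2 ^ M := by
          calc M.choose m ≤ ∑ i ∈ Finset.range (M + 1), M.choose i :=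
              Finset.single_le_sum (f := fun i => M.choose i) (fun i _ => Nat.zero_le _)
                (Finset.mem_range.2 (by omega))
            _ = 2 ^ M := Nat.sum_range_choose M
        exact_mod_cast hle
      simpa [Complex.norm_natCast] using hch
    have hpowle : ((2 * C₁ + 1):ℝ) ^ m ≤ (2 * C₁ + 1) ^ M :=
      pow_le_pow_right₀ (by linarith) (by omega)
    have hexple : Real.exp (-d ^ 2 / (4 ^ m * (c * ℓ ^ 2))) ≤
        C₂ * (2 : ℝ) ^ (-(j : ℝ) * N) := by
      refine le_trans ?_ (hC₂ j hj)
      apply Real.exp_le_exp.2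
      have harg : -d ^ 2 / (4 ^ m * (c * ℓ ^ 2)) =
          -(((2:ℝ) ^ (j - 1) - 1) ^ 2 / (4 ^ (m + 1) * c)) := by
        rw [hd, pow_succ]
        field_simp
        ring
      rw [harg]
      have hjj : ((j : ℝ) - 1) ^ 2 * (1 / (4 ^ (M + 1) * c)) ≤
          ((2:ℝ) ^ (j - 1) - 1) ^ 2 / (4 ^ (m + 1) * c) := by
        have hb1 : ((j : ℝ) - 1) ≤ (2:ℝ) ^ (j - 1) - 1 := by
          have hn1 : j ≤ 2 ^ (j - 1) := by
            have := Nat.lt_two_pow_self (n := j - 1)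
            omega
          have hn2 : (j : ℝ) ≤ (2:ℝ) ^ (j - 1) := by exact_mod_cast hn1
          linarith
        have hj0 : (0:ℝ) ≤ (j : ℝ) - 1 := by
          have : (1:ℝ) ≤ (j:ℝ) := by exact_mod_cast hj
          linarith
        have hsq : ((j : ℝ) - 1) ^ 2 ≤ ((2:ℝ) ^ (j - 1) - 1) ^ 2 :=
          pow_le_pow_left₀ hj0 hb1 2
        have hden : (4:ℝ) ^ (m + 1) * c ≤ 4 ^ (M + 1) * c := by
          have : (4:ℝ) ^ (m + 1) ≤ 4 ^ (M + 1) :=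
            pow_le_pow_right₀ (by norm_num) (by omega)
          exact mul_le_mul_of_nonneg_right this hc.le
        have hden0 : (0:ℝ) < 4 ^ (m + 1) * c := by positivity
        have hden0' : (0:ℝ) < 4 ^ (M + 1) * c := by positivity
        calc ((j : ℝ) - 1) ^ 2 * (1 / (4 ^ (M + 1) * c))
            = ((j : ℝ) - 1) ^ 2 / (4 ^ (M + 1) * c) := by ring
          _ ≤ ((2:ℝ) ^ (j - 1) - 1) ^ 2 / (4 ^ (M + 1) * c) := by
              exact div_le_div_of_nonneg_right hsq hden0'.le
          _ ≤ ((2:ℝ) ^ (j - 1) - 1) ^ 2 / (4 ^ (m + 1) * c) := by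
              apply div_le_div_of_nonneg_left (by positivity) hden0 hden
      linarith
    calc (2 * C₁ + 1) ^ m * Real.exp (-d ^ 2 / (4 ^ m * (c * ℓ ^ 2))) * ‖cm‖
        ≤ (2 * C₁ + 1) ^ M * (C₂ * (2 : ℝ) ^ (-(j : ℝ) * N)) * (2:ℝ) ^ M := by
          have hc1 : (0:ℝ) ≤ (2 * C₁ + 1) ^ m := by positivity
          have he1 : (0:ℝ) ≤ Real.exp (-d ^ 2 / (4 ^ m * (c * ℓ ^ 2))) := (Real.exp_pos _).le
          have hcm0 : (0:ℝ) ≤ ‖cm‖ := norm_nonneg _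
          have h1 : (2 * C₁ + 1) ^ m * Real.exp (-d ^ 2 / (4 ^ m * (c * ℓ ^ 2))) ≤
              (2 * C₁ + 1) ^ M * (C₂ * (2 : ℝ) ^ (-(j : ℝ) * N)) :=
            mul_le_mul hpowle hexple he1 (by positivity)
          exact mul_le_mul h1 hcmnorm hcm0 (by positivity)
      _ = (2 * C₁ + 1) ^ M * 2 ^ M * (C₂ * (2 : ℝ) ^ (-(j : ℝ) * N)) := by ring
  -- sum it all
  refine (eLpNorm_indicator_sum_le (Finset.range (M + 1)) Sj hSm _).trans ?_
  refine (Finset.sum_le_sum hterm).trans ?_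
  rw [Finset.sum_const, Finset.card_range, nsmul_eq_mul]
  have hcast : ((M + 1 : ℕ) : ℝ≥0∞) = ENNReal.ofReal ((M : ℝ) + 1) := by
    rw [← ENNReal.ofReal_natCast]
    norm_num
  rw [hcast, ← mul_assoc, ← ENNReal.ofReal_mul (by positivity)]
  refine mul_le_mul_left (ENNReal.ofReal_le_ofReal (le_of_eq ?_)) _
  ring
end
end
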